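/- arXiv:1803.10809 — 8 statements merged into one kernel-verified Lean document; each statement's English description precedes it below -/
import Mathlib

section
/- For a > 0 and r > 0, if a₀ = 2r·tanh(a/(2r))/√(1 + (1/2)·tanh²(a/(2r))), then a = 2r·artanh((a₀/2)/√(r² − a₀²/8)) and a₀ < (2/3)·√6·r. -/
/-- The inverse hyperbolic tangent, `artanh x = (1/2) * log ((1+x)/(1-x))`. -/
noncomputable def artanh (x : ℝ) : ℝ := (1 / 2) * Real.log ((1 + x) / (1 - x))

lemma artanh_tanh (x : ℝ) : artanh (Real.tanh x) = x := by
  unfold artanh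
  rw [Real.tanh_eq_sinh_div_cosh]
  have hc : 0 < Real.cosh x := Real.cosh_pos x
  have h1 : 1 + Real.sinh x / Real.cosh x = Real.exp x / Real.cosh x := by
    field_simp
    rw [Real.cosh_add_sinh]
  have h2 : 1 - Real.sinh x / Real.cosh x = Real.exp (-x) / Real.cosh x := by
    field_simp
    rw [Real.cosh_sub_sinh]
  have h3 : Real.exp x / Real.cosh x / (Real.exp (-x) / Real.cosh x)
      = Real.exp (x - -x) := by
    rw [Real.exp_sub]
    field_simp
  rw [h1, h2, h3, Real.log_exp]
  ring

theorem stmt_2 (a r a₀ : ℝ) (ha : 0 < a) (hr : 0 < r)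
    (ha₀ : a₀ = 2 * r * Real.tanh (a / (2 * r)) /
      Real.sqrt (1 + (1 / 2) * Real.tanh (a / (2 * r)) ^ 2)) :
    a = 2 * r * artanh ((a₀ / 2) / Real.sqrt (r ^ 2 - a₀ ^ 2 / 8)) ∧
    a₀ < (2 / 3) * Real.sqrt 6 * r := by
  set x := a / (2 * r) with hx
  have hxpos : 0 < x := div_pos ha (by linarith)
  set t := Real.tanh x with htdef
  have hc : 0 < Real.cosh x := Real.cosh_pos x
  have hs : 0 < Real.sinh x := Real.sinh_pos_iff.mpr hxpos
  have ht0 : 0 < t := by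
    rw [htdef, Real.tanh_eq_sinh_div_cosh]; positivity
  have ht1 : t < 1 := by
    rw [htdef, Real.tanh_eq_sinh_div_cosh]
    rw [div_lt_one hc]
    exact Real.sinh_lt_cosh x
  -- s = sqrt(1 + t^2/2)
  set s := Real.sqrt (1 + (1 / 2) * t ^ 2) with hsdef
  have hsarg : (0:ℝ) < 1 + (1 / 2) * t ^ 2 := by positivity
  have hspos : 0 < s := Real.sqrt_pos.mpr hsarg
  have hssq : s ^ 2 = 1 + (1 / 2) * t ^ 2 := Real.sq_sqrt hsarg.le
  have ha₀' : a₀ = 2 * r * t / s := ha₀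
  have hkey : r ^ 2 - a₀ ^ 2 / 8 = (r / s) ^ 2 := by
    rw [ha₀', div_pow, div_pow, hssq]
    have hne : (1 : ℝ) + 1 / 2 * t ^ 2 ≠ 0 := hsarg.ne'
    field_simp
    ring
  have hsqrt : Real.sqrt (r ^ 2 - a₀ ^ 2 / 8) = r / s := by
    rw [hkey, Real.sqrt_sq (by positivity)]
  have harg : (a₀ / 2) / Real.sqrt (r ^ 2 - a₀ ^ 2 / 8) = t := by
    rw [hsqrt, ha₀']
    field_simp
  constructor
  · rw [harg, htdef, artanh_tanh, hx]
    field_simp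
  · -- a₀ < (2/3)√6 r ; note ((2/3)√6)^2 = 8/3
    have hbound : a₀ ^ 2 < 8 / 3 * r ^ 2 := by
      rw [ha₀']
      rw [div_pow, div_lt_iff₀ (by positivity)]
      rw [hssq]
      have ht2 : t ^ 2 < 1 := by nlinarith
      nlinarith [mul_pos (pow_pos hr 2) (sub_pos.mpr ht2)]
    have hrhs : ((2 / 3) * Real.sqrt 6 * r) ^ 2 = 8 / 3 * r ^ 2 := by
      have : Real.sqrt 6 ^ 2 = 6 := Real.sq_sqrt (by norm_num)
      nlinarith
    have ha₀pos : 0 < a₀ := by rw [ha₀']; positivity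
    have hrhspos : 0 < (2 / 3) * Real.sqrt 6 * r := by positivity
    exact lt_of_pow_lt_pow_left₀ 2 hrhspos.le (by rw [hrhs]; exact hbound)
end

section
/- For any fixed a > 0, the limit as r → ∞ of r²·(3·arccos(cos(a/r)/(cos(a/r)+1)) − π) equals (√3/4)·a². -/
open Real Filter Topology

noncomputable def phi6 : ℝ → ℝ := fun y => 3 * Real.arccos ((1 - y) / (2 - y)) - Real.pi

lemma arccos_half : Real.arccos (1 / 2) = Real.pi / 3 := by
  rw [show (1/2:ℝ) = Real.cos (Real.pi/3) from Real.cos_pi_div_three.symm,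
    Real.arccos_cos (by positivity) (by nlinarith [Real.pi_pos])]

lemma phi6_zero : phi6 0 = 0 := by
  have h : ((1:ℝ) - 0)/(2 - 0) = 1/2 := by norm_num
  simp only [phi6, h, arccos_half]; ring

lemma sqrt3_sq : Real.sqrt 3 * Real.sqrt 3 = 3 := Real.mul_self_sqrt (by norm_num)

lemma sqrt3_pos : (0:ℝ) < Real.sqrt 3 := Real.sqrt_pos.mpr (by norm_num)

lemma sqrt34 : Real.sqrt (3/4) = Real.sqrt 3 / 2 := by
  have h : ((Real.sqrt 3)/2)^2 = 3/4 := by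
    rw [div_pow, sq, sqrt3_sq]; norm_num
  rw [← h, Real.sqrt_sq (by positivity)]

lemma phi6_deriv : HasDerivAt phi6 (Real.sqrt 3 / 2) 0 := by
  have hu : HasDerivAt (fun y : ℝ => (1 - y) / (2 - y)) (-(1/4)) 0 := by
    have h1 : HasDerivAt (fun y : ℝ => 1 - y) (-1) 0 := (hasDerivAt_id 0).const_sub 1
    have h2 : HasDerivAt (fun y : ℝ => 2 - y) (-1) 0 := (hasDerivAt_id 0).const_sub 2
    have := h1.div h2 (by norm_num)
    exact this.congr_deriv (by norm_num)
  have huval : ((1:ℝ) - 0) / (2 - 0) = 1/2 := by norm_num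
  have harc : HasDerivAt Real.arccos (-(1 / Real.sqrt (1 - (1/2:ℝ) ^ 2)))
      (((1:ℝ) - 0) / (2 - 0)) := by
    rw [huval]
    exact Real.hasDerivAt_arccos (by norm_num) (by norm_num)
  have hcomp := HasDerivAt.comp (x := (0:ℝ)) harc hu
  have h := (hcomp.const_mul 3).sub_const Real.pi
  refine h.congr_deriv ?_
  rw [show (1 - (1/2:ℝ)^2) = 3/4 by norm_num, sqrt34]
  have h3 := sqrt3_sq
  have hne : Real.sqrt 3 ≠ 0 := ne_of_gt sqrt3_pos
  field_simp
  nlinarith [sqrt3_sq]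

lemma lim_phi : Filter.Tendsto (fun y => phi6 y / y) (nhdsWithin 0 {(0:ℝ)}ᶜ)
    (nhds (Real.sqrt 3 / 2)) := by
  have h := hasDerivAt_iff_tendsto_slope.mp phi6_deriv
  refine h.congr fun y => ?_
  simp [slope_def_field, phi6_zero, div_eq_inv_mul]

lemma lim_sin : Filter.Tendsto (fun t => Real.sin t / t) (nhdsWithin 0 {(0:ℝ)}ᶜ)
    (nhds 1) := by
  have h := hasDerivAt_iff_tendsto_slope.mp (Real.hasDerivAt_sin 0)
  rw [Real.cos_zero] at h
  refine h.congr fun t => ?_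
  simp [slope_def_field, div_eq_inv_mul]

lemma lim_cos : Filter.Tendsto (fun x => (1 - Real.cos x) / x ^ 2) (nhdsWithin 0 {(0:ℝ)}ᶜ)
    (nhds (1/2)) := by
  have hmap : Filter.Tendsto (fun x : ℝ => x / 2) (nhdsWithin 0 {(0:ℝ)}ᶜ)
      (nhdsWithin 0 {(0:ℝ)}ᶜ) := by
    rw [tendsto_nhdsWithin_iff]
    constructor
    · have : Filter.Tendsto (fun x : ℝ => x / 2) (nhds 0) (nhds (0/2)) :=
        (continuous_id.div_const 2).tendsto 0
      simpa using this.mono_left nhdsWithin_le_nhds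
    · filter_upwards [self_mem_nhdsWithin] with x hx
      intro h
      have h2 : x / 2 = 0 := h
      exact hx (show x ∈ ({0} : Set ℝ) from by
        simp only [Set.mem_singleton_iff]; linarith)
  have h := ((lim_sin.comp hmap).mul (lim_sin.comp hmap)).mul tendsto_const_nhds (b := (1/2:ℝ))
  have hval : (1:ℝ) * 1 * (1/2) = 1/2 := by norm_num
  rw [hval] at h
  refine h.congr' ?_
  filter_upwards [self_mem_nhdsWithin] with x hx
  have hx0 : x ≠ 0 := hx
  have hsin : Real.sin (x/2) ^ 2 = 1/2 - Real.cos x / 2 := by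
    have := Real.sin_sq_eq_half_sub (x/2)
    rwa [show 2 * (x/2) = x by ring] at this
  have h2 : (1:ℝ) - Real.cos x = 2 * Real.sin (x/2)^2 := by linarith
  simp only [Function.comp]
  rw [h2]
  field_simp

lemma lim_y : Filter.Tendsto (fun x => 1 - Real.cos x) (nhdsWithin 0 {(0:ℝ)}ᶜ)
    (nhdsWithin 0 {(0:ℝ)}ᶜ) := by
  rw [tendsto_nhdsWithin_iff]
  constructor
  · have : Filter.Tendsto (fun x : ℝ => 1 - Real.cos x) (nhds 0) (nhds (1 - Real.cos 0)) :=
      (continuous_const.sub Real.continuous_cos).tendsto 0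
    simpa using this.mono_left nhdsWithin_le_nhds
  · have hmem : Set.Ioo (-1 : ℝ) 1 ∈ nhdsWithin (0:ℝ) {(0:ℝ)}ᶜ :=
      nhdsWithin_le_nhds (Ioo_mem_nhds (by norm_num) (by norm_num))
    filter_upwards [self_mem_nhdsWithin, hmem] with x hx hxI
    have hpi := Real.pi_gt_three
    have hcos : Real.cos x ≠ 1 := by
      intro h
      exact hx ((Real.cos_eq_one_iff_of_lt_of_lt (by cases hxI; linarith)
        (by cases hxI; linarith)).mp h)
    exact sub_ne_zero.mpr fun h => hcos h.symm

lemma lim_g : Filter.Tendsto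
    (fun x => (3 * Real.arccos (Real.cos x / (Real.cos x + 1)) - Real.pi) / x ^ 2)
    (nhdsWithin 0 {(0:ℝ)}ᶜ) (nhds (Real.sqrt 3 / 4)) := by
  have h := ((lim_phi.comp lim_y).mul lim_cos)
  have hval : Real.sqrt 3 / 2 * (1/2) = Real.sqrt 3 / 4 := by ring
  rw [hval] at h
  refine h.congr' ?_
  have hne : ∀ᶠ x in nhdsWithin (0:ℝ) {(0:ℝ)}ᶜ, (1:ℝ) - Real.cos x ≠ 0 := by
    have := lim_y
    rw [tendsto_nhdsWithin_iff] at this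
    exact this.2
  filter_upwards [hne] with x hx
  simp only [Function.comp]
  have hphi : phi6 (1 - Real.cos x)
      = 3 * Real.arccos (Real.cos x / (Real.cos x + 1)) - Real.pi := by
    have harg : (1 - (1 - Real.cos x)) / (2 - (1 - Real.cos x))
        = Real.cos x / (Real.cos x + 1) := by ring_nf
    simp only [phi6, harg]
  rw [hphi]
  field_simp

theorem stmt_6 (a : ℝ) (ha : 0 < a) :
    Filter.Tendsto (fun r : ℝ =>
      r ^ 2 * (3 * Real.arccos (Real.cos (a / r) / (Real.cos (a / r) + 1)) - Real.pi))
      Filter.atTop (nhds (Real.sqrt 3 / 4 * a ^ 2)) := by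
  have hmap : Filter.Tendsto (fun r : ℝ => a / r) Filter.atTop
      (nhdsWithin 0 {(0:ℝ)}ᶜ) := by
    rw [tendsto_nhdsWithin_iff]
    constructor
    · exact Filter.Tendsto.div_atTop tendsto_const_nhds tendsto_id
    · filter_upwards [Filter.eventually_ge_atTop (1:ℝ)] with r hr
      have : (0:ℝ) < a / r := div_pos ha (by linarith)
      exact ne_of_gt this
  have h := (lim_g.comp hmap).const_mul (a ^ 2)
  have hval : a ^ 2 * (Real.sqrt 3 / 4) = Real.sqrt 3 / 4 * a ^ 2 := by ring
  rw [hval] at h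
  refine h.congr' ?_
  filter_upwards [Filter.eventually_ge_atTop (1:ℝ)] with r hr
  have hr0 : r ≠ 0 := by intro h; rw [h] at hr; norm_num at hr
  simp only [Function.comp]
  field_simp
end

section
/- For any fixed a > 0, the limit as r → ∞ of r²·(π − 3·arccos(cosh(a/r)/(cosh(a/r)+1))) equals (√3/4)·a². -/
open Real Filter Set

lemma cosh_pos_stuff (x : ℝ) : (1:ℝ) ≤ Real.cosh x := Real.one_le_cosh x

lemma deriv_key (x : ℝ) :
    HasDerivAt (fun t => Real.pi - 3 * Real.arccos (Real.cosh t / (Real.cosh t + 1)))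
      (3 * Real.sinh x / ((Real.cosh x + 1) * Real.sqrt (2 * Real.cosh x + 1))) x := by
  have hc : (1:ℝ) ≤ Real.cosh x := Real.one_le_cosh x
  have hc1 : (0:ℝ) < Real.cosh x + 1 := by linarith
  have hne : Real.cosh x + 1 ≠ 0 := ne_of_gt hc1
  set u := Real.cosh x / (Real.cosh x + 1) with hu
  have hu1 : u < 1 := by
    rw [hu, div_lt_one hc1]; linarith
  have hu0 : 0 < u := div_pos (by linarith) hc1
  have hinner : HasDerivAt (fun t => Real.cosh t / (Real.cosh t + 1))
      (Real.sinh x / (Real.cosh x + 1) ^ 2) x := by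
    have h := (Real.hasDerivAt_cosh x).div ((Real.hasDerivAt_cosh x).add_const 1) hne
    refine h.congr_deriv ?_
    ring
  have harccos := (Real.hasDerivAt_arccos (by linarith : u ≠ -1) (ne_of_lt hu1)).comp x hinner
  have h := (harccos.const_mul 3).const_sub Real.pi
  refine h.congr_deriv ?_
  have h1u : 1 - u ^ 2 = (2 * Real.cosh x + 1) / (Real.cosh x + 1) ^ 2 := by
    rw [hu]; field_simp; ring
  have hs : Real.sqrt (1 - u ^ 2) = Real.sqrt (2 * Real.cosh x + 1) / (Real.cosh x + 1) := by
    rw [h1u, Real.sqrt_div (by positivity) _, Real.sqrt_sq hc1.le]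
  rw [hs]
  have hsq : Real.sqrt (2 * Real.cosh x + 1) > 0 := Real.sqrt_pos.mpr (by linarith)
  field_simp

theorem stmt_7 (a : ℝ) (ha : 0 < a) :
    Filter.Tendsto (fun r : ℝ =>
      r ^ 2 * (Real.pi - 3 * Real.arccos (Real.cosh (a / r) / (Real.cosh (a / r) + 1))))
      Filter.atTop (nhds (Real.sqrt 3 / 4 * a ^ 2)) := by
  set f : ℝ → ℝ := fun t => Real.pi - 3 * Real.arccos (Real.cosh t / (Real.cosh t + 1)) with hf
  -- limit of derivative ratio
  have hsinh : Tendsto (fun x : ℝ => Real.sinh x / x) (nhdsWithin 0 (Ioi 0)) (nhds 1) := by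
    have h := (Real.hasDerivAt_sinh 0)
    rw [hasDerivAt_iff_tendsto_slope] at h
    simp only [Real.cosh_zero] at h
    have : Tendsto (fun x : ℝ => Real.sinh x / x) (nhdsWithin 0 {(0:ℝ)}ᶜ) (nhds 1) := by
      refine h.congr' ?_
      filter_upwards [self_mem_nhdsWithin] with x hx
      simp [slope, hx, Real.sinh_zero]
      ring
    exact this.mono_left (nhdsWithin_mono _ (fun x hx => ne_of_gt hx))
  have hrest : Tendsto (fun x : ℝ => 3 / (2 * ((Real.cosh x + 1) * Real.sqrt (2 * Real.cosh x + 1))))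
      (nhdsWithin 0 (Ioi 0)) (nhds (Real.sqrt 3 / 4)) := by
    have hcont : ContinuousAt (fun x : ℝ => 3 / (2 * ((Real.cosh x + 1) * Real.sqrt (2 * Real.cosh x + 1)))) 0 := by
      apply ContinuousAt.div continuousAt_const
      · fun_prop
      · simp [Real.cosh_zero]
        positivity
    have := (hcont.continuousWithinAt (s := Set.Ioi 0)).tendsto
    simp only [Real.cosh_zero] at this
    convert this using 2
    have : (2:ℝ) * 1 + 1 = 3 := by norm_num
    rw [this]
    have h3 : (0:ℝ) < Real.sqrt 3 := Real.sqrt_pos.mpr (by norm_num)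
    rw [div_eq_div_iff (by norm_num) (by positivity)]
    rw [show (2:ℝ) * ((1 + 1) * Real.sqrt 3) = 4 * Real.sqrt 3 by ring]
    rw [show Real.sqrt 3 * (4 * Real.sqrt 3) = 4 * (Real.sqrt 3 * Real.sqrt 3) by ring,
      Real.mul_self_sqrt (by norm_num)]
    norm_num
  have hdiv : Tendsto (fun x : ℝ => (3 * Real.sinh x / ((Real.cosh x + 1) * Real.sqrt (2 * Real.cosh x + 1))) / (2 * x))
      (nhdsWithin 0 (Ioi 0)) (nhds (Real.sqrt 3 / 4)) := by
    have := hsinh.mul hrest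
    rw [one_mul] at this
    refine this.congr' ?_
    filter_upwards [self_mem_nhdsWithin] with x hx
    have hx0 : x ≠ 0 := ne_of_gt hx
    have hc1 : Real.cosh x + 1 > 0 := by have := Real.one_le_cosh x; linarith
    have hsq : Real.sqrt (2 * Real.cosh x + 1) > 0 :=
      Real.sqrt_pos.mpr (by have := Real.one_le_cosh x; linarith)
    field_simp
  -- L'Hôpital
  have hlhop : Tendsto (fun t => f t / t ^ 2) (nhdsWithin 0 (Ioi 0)) (nhds (Real.sqrt 3 / 4)) := by
    apply HasDerivAt.lhopital_zero_right_on_Ioo (f' := fun x =>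
        3 * Real.sinh x / ((Real.cosh x + 1) * Real.sqrt (2 * Real.cosh x + 1)))
      (g' := fun x => 2 * x) (b := 1) one_pos
    · intro x _; exact deriv_key x
    · intro x _
      simpa using (hasDerivAt_pow 2 x)
    · intro x hx
      exact mul_ne_zero two_ne_zero (ne_of_gt hx.1)
    · have hcont : ContinuousAt f 0 := by
        rw [hf]
        apply ContinuousAt.sub continuousAt_const
        apply ContinuousAt.mul continuousAt_const
        apply Real.continuous_arccos.continuousAt.comp
        apply ContinuousAt.div (by fun_prop) (by fun_prop)
        simp only [Real.cosh_zero]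
        norm_num
      have harc : Real.arccos (1/2) = Real.pi / 3 := by
        rw [show (1:ℝ)/2 = Real.cos (Real.pi/3) by rw [Real.cos_pi_div_three]]
        exact Real.arccos_cos (by positivity) (by linarith [Real.pi_pos])
      have hval : f 0 = 0 := by
        rw [hf]
        simp only [Real.cosh_zero]
        norm_num [harc]
        ring
      have := (hcont.continuousWithinAt (s := Set.Ioi 0)).tendsto
      rwa [hval] at this
    · have : Tendsto (fun x : ℝ => x ^ 2) (nhdsWithin 0 (Ioi 0)) (nhds ((0:ℝ) ^ 2)) :=
        ((continuous_pow 2).continuousAt (x := (0:ℝ))).continuousWithinAt.tendsto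
      simpa using this
    · exact hdiv
  -- change of variables
  have hcomp : Tendsto (fun r : ℝ => a / r) atTop (nhdsWithin 0 (Ioi 0)) := by
    rw [tendsto_nhdsWithin_iff]
    constructor
    · exact tendsto_const_nhds.div_atTop tendsto_id
    · filter_upwards [eventually_gt_atTop (0:ℝ)] with r hr
      exact div_pos ha hr
  have h1 := (hlhop.comp hcomp).const_mul (a ^ 2)
  have h2 : Tendsto (fun r : ℝ => a ^ 2 * (f (a / r) / (a / r) ^ 2)) atTop
      (nhds (Real.sqrt 3 / 4 * a ^ 2)) := by
    convert h1 using 2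
    · rfl
    · ring
  refine h2.congr' ?_
  filter_upwards [eventually_gt_atTop (0:ℝ)] with r hr
  have haR : a / r > 0 := div_pos ha hr
  rw [hf]
  field_simp
end

section
/- For every r > 0 and a > 0 with a < 2r·arctan(√2), the area of the regular spherical triangle satisfies r²·(3·arccos(cos(a/r)/(cos(a/r)+1)) − π) > (√3/4)·a². -/
open Real

-- arctan √2 < 1
lemma arctan_sqrt_two_lt_one : Real.arctan (Real.sqrt 2) < 1 := by
  have hpi : (3 : ℝ) < π := Real.pi_gt_three
  have hsinb := Real.sin_bound (x := 1) (by norm_num)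
  have hcosb := Real.cos_bound (x := 1) (by norm_num)
  have hsin : (75 : ℝ) / 96 ≤ Real.sin 1 := by
    have := abs_sub_le_iff.1 hsinb
    simp only [abs_one, one_pow] at this
    linarith [this.1, this.2]
  have hcos : Real.cos 1 ≤ 53 / 96 := by
    have := abs_sub_le_iff.1 hcosb
    simp only [abs_one, one_pow] at this
    linarith [this.1, this.2]
  have hsqrt2 : Real.sqrt 2 < 75 / 53 := by
    nlinarith [Real.sq_sqrt (by norm_num : (0:ℝ) ≤ 2), Real.sqrt_nonneg 2]
  have hcos1pos : 0 < Real.cos 1 := Real.cos_one_pos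
  have htan : Real.sqrt 2 < Real.tan 1 := by
    rw [Real.tan_eq_sin_div_cos, lt_div_iff₀ hcos1pos]
    calc Real.sqrt 2 * Real.cos 1 ≤ Real.sqrt 2 * (53 / 96) := by
          nlinarith [Real.sqrt_nonneg 2]
      _ < (75 / 53) * (53 / 96) := by nlinarith
      _ = 75 / 96 := by norm_num
      _ ≤ Real.sin 1 := hsin
  calc Real.arctan (Real.sqrt 2) < Real.arctan (Real.tan 1) :=
        Real.arctan_strictMono htan
    _ = 1 := Real.arctan_tan (by linarith) (by linarith)

set_option maxHeartbeats 1000000 in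
-- core inequality: for 0 < y ≤ 1,
-- cos (2y) < cos (π/3 + (√3/12)(2y)^2) * (cos (2y) + 1)
lemma core_ineq (y : ℝ) (hy0 : 0 < y) (hy1 : y ≤ 1) :
    Real.cos (2 * y) <
      Real.cos (π / 3 + Real.sqrt 3 / 12 * (2 * y) ^ 2) * (Real.cos (2 * y) + 1) := by
  have hs := Real.sin y
  set s := Real.sin y with hsdef
  have hcos2y : Real.cos (2 * y) = 1 - 2 * s ^ 2 := by
    rw [Real.cos_two_mul', Real.cos_sq']; ring
  set u := Real.sqrt 3 / 12 * (2 * y) ^ 2 with hu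
  have hsqrt3 : Real.sqrt 3 ^ 2 = 3 := Real.sq_sqrt (by norm_num)
  have hsqrt3pos : 0 < Real.sqrt 3 := Real.sqrt_pos.2 (by norm_num)
  have hu0 : 0 < u := by positivity
  have hcosadd : Real.cos (π / 3 + u) =
      1 / 2 * Real.cos u - Real.sqrt 3 / 2 * Real.sin u := by
    rw [Real.cos_add, Real.cos_pi_div_three, Real.sin_pi_div_three]
  set C := Real.cos u with hC
  set S := Real.sin u with hS
  -- bounds
  have hsinu : S ≤ u := (Real.sin_lt hu0).le
  have hcosu : 1 - u ^ 2 / 2 ≤ C := Real.one_sub_sq_div_two_le_cos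
  have hsgt : y - y ^ 3 / 4 < s := by
    have := Real.sin_gt_sub_cube hy0; linarith [pow_pos hy0 3]
  have hs2le : s ^ 2 ≤ 1 := Real.sin_sq_le_one y
  have hsL : 0 < y - y ^ 3 / 4 := by nlinarith
  -- key lower bound for C − √3 S
  have hueq : Real.sqrt 3 * u = y ^ 2 := by
    rw [hu]; linear_combination (y ^ 2 / 3) * hsqrt3
  have hu2 : u ^ 2 = y ^ 4 / 3 := by
    rw [hu]; linear_combination (y ^ 4 / 9) * hsqrt3
  have h1 : Real.sqrt 3 * S ≤ Real.sqrt 3 * u :=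
    mul_le_mul_of_nonneg_left hsinu hsqrt3pos.le
  have hB : 1 - y ^ 2 - y ^ 4 / 6 ≤ C - Real.sqrt 3 * S := by
    linarith
  -- polynomial inequality
  have hy4 : 0 < y ^ 4 := by positivity
  have h46 : y ^ 6 ≤ y ^ 4 := pow_le_pow_of_le_one hy0.le hy1 (by norm_num)
  have h48 : y ^ 8 ≤ y ^ 4 := pow_le_pow_of_le_one hy0.le hy1 (by norm_num)
  have h10 : 0 ≤ y ^ 10 := by positivity
  have hP : 0 < (y - y ^ 3 / 4) ^ 2 * (1 + y ^ 2 + y ^ 4 / 6) - (y ^ 2 + y ^ 4 / 6) := by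
    nlinarith [hy4, h46, h48, h10]
  have hsq : (y - y ^ 3 / 4) ^ 2 < s ^ 2 := by nlinarith
  have hmul : (y - y ^ 3 / 4) ^ 2 * (1 + y ^ 2 + y ^ 4 / 6) <
      s ^ 2 * (1 + y ^ 2 + y ^ 4 / 6) := by
    apply mul_lt_mul_of_pos_right hsq (by positivity)
  have hgoal : 0 < (1 - s ^ 2) * (C - Real.sqrt 3 * S) + 2 * s ^ 2 - 1 := by
    have h2 : (1 - s ^ 2) * (1 - y ^ 2 - y ^ 4 / 6) ≤
        (1 - s ^ 2) * (C - Real.sqrt 3 * S) :=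
      mul_le_mul_of_nonneg_left hB (by nlinarith)
    have hexp : (1 - s ^ 2) * (1 - y ^ 2 - y ^ 4 / 6) + 2 * s ^ 2 - 1 =
        s ^ 2 * (1 + y ^ 2 + y ^ 4 / 6) - (y ^ 2 + y ^ 4 / 6) := by ring
    linarith
  rw [hcos2y, hcosadd]
  have hring : (1 / 2 * C - Real.sqrt 3 / 2 * S) * (1 - 2 * s ^ 2 + 1) - (1 - 2 * s ^ 2) =
      (1 - s ^ 2) * (C - Real.sqrt 3 * S) + 2 * s ^ 2 - 1 := by ring
  linarith


lemma aux_ineq (x : ℝ) (hx0 : 0 < x) (hx2 : x < 2) :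
    Real.sqrt 3 / 4 * x ^ 2 <
      3 * Real.arccos (Real.cos x / (Real.cos x + 1)) - π := by
  have hpi : (3 : ℝ) < π := Real.pi_gt_three
  have hy0 : 0 < x / 2 := by positivity
  have hy1 : x / 2 ≤ 1 := by linarith
  have hsqrt3 : Real.sqrt 3 ^ 2 = 3 := Real.sq_sqrt (by norm_num)
  have hsqrt3pos : 0 < Real.sqrt 3 := Real.sqrt_pos.2 (by norm_num)
  have hsqrt3lt : Real.sqrt 3 < 1.8 := by nlinarith
  have hθπ : π / 3 + Real.sqrt 3 / 12 * x ^ 2 ≤ π := by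
    have hx4 : x ^ 2 < 4 := by nlinarith
    have h06 : Real.sqrt 3 / 12 * x ^ 2 < 0.6 := by nlinarith
    linarith
  have hcosx : -1/2 < Real.cos x := by
    have h23 : x < 2 * π / 3 := by linarith
    have hlt2 := Real.cos_lt_cos_of_nonneg_of_le_pi hx0.le
      (by linarith : 2 * π / 3 ≤ π) h23
    have hval : Real.cos (2 * π / 3) = -(1/2) := by
      have h : (2 : ℝ) * π / 3 = π - π / 3 := by ring
      rw [h, Real.cos_pi_sub, Real.cos_pi_div_three]
    rw [hval] at hlt2; linarith
  have hden : 0 < Real.cos x + 1 := by linarith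
  have ht1 : Real.cos x / (Real.cos x + 1) ≤ 1 := by
    rw [div_le_one hden]; linarith
  have htm1 : -1 ≤ Real.cos x / (Real.cos x + 1) := by
    rw [le_div_iff₀ hden]; linarith
  have hcore := core_ineq (x / 2) hy0 hy1
  rw [show 2 * (x / 2) = x by ring] at hcore
  have htcos : Real.cos x / (Real.cos x + 1) <
      Real.cos (π / 3 + Real.sqrt 3 / 12 * x ^ 2) := by
    rw [div_lt_iff₀ hden]; exact hcore
  have harccos : π / 3 + Real.sqrt 3 / 12 * x ^ 2 <
      Real.arccos (Real.cos x / (Real.cos x + 1)) := by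
    by_contra h
    push_neg at h
    have hc := Real.cos_le_cos_of_nonneg_of_le_pi
      (Real.arccos_nonneg _) hθπ h
    rw [Real.cos_arccos htm1 ht1] at hc
    linarith
  linarith

theorem stmt_8 (r a : ℝ) (hr : 0 < r) (ha : 0 < a)
    (hlt : a < 2 * r * Real.arctan (Real.sqrt 2)) :
    r ^ 2 * (3 * Real.arccos (Real.cos (a / r) / (Real.cos (a / r) + 1)) - Real.pi) >
      Real.sqrt 3 / 4 * a ^ 2 := by
  have hx0 : 0 < a / r := div_pos ha hr
  have hx2 : a / r < 2 := by
    have h1 := arctan_sqrt_two_lt_one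
    have harctanpos : 0 < Real.arctan (Real.sqrt 2) := by
      have h := Real.arctan_strictMono (show (0:ℝ) < Real.sqrt 2 by positivity)
      simpa [Real.arctan_zero] using h
    rw [div_lt_iff₀ hr]; nlinarith
  have hmain := aux_ineq (a / r) hx0 hx2
  have hax : a = r * (a / r) := by field_simp
  calc Real.sqrt 3 / 4 * a ^ 2 = r ^ 2 * (Real.sqrt 3 / 4 * (a / r) ^ 2) := by
        field_simp
    _ < r ^ 2 * (3 * Real.arccos (Real.cos (a / r) / (Real.cos (a / r) + 1)) - π) :=
        mul_lt_mul_of_pos_left hmain (by positivity)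
end

section
/- For every r > 0 and a > 0, the area of the regular hyperbolic triangle satisfies r²·(π − 3·arccos(cosh(a/r)/(cosh(a/r)+1))) < (√3/4)·a². -/
open Real

private lemma sinh_lt_mul_cosh {x : ℝ} (hx : 0 < x) : Real.sinh x < x * Real.cosh x := by
  have key : StrictMonoOn (fun t : ℝ => t * Real.cosh t - Real.sinh t) (Set.Ici 0) := by
    apply strictMonoOn_of_deriv_pos (convex_Ici 0)
    · exact (continuous_id.mul Real.continuous_cosh).sub Real.continuous_sinh |>.continuousOn
    · intro t ht
      rw [interior_Ici] at ht
      have h1 : HasDerivAt (fun t : ℝ => t * Real.cosh t - Real.sinh t)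
          (1 * Real.cosh t + t * Real.sinh t - Real.cosh t) t :=
        ((hasDerivAt_id t).mul (Real.hasDerivAt_cosh t)).sub (Real.hasDerivAt_sinh t)
      rw [h1.deriv]
      have : 0 < t * Real.sinh t := mul_pos ht (Real.sinh_pos_iff.2 ht)
      linarith
  have := key (Set.self_mem_Ici) (Set.mem_Ici.2 hx.le) hx
  simpa using this

/-- Key inequality: `sinh t < t * (cosh t + 1) / 2` for `t > 0`. -/
private lemma sinh_lt_half {t : ℝ} (ht : 0 < t) :
    Real.sinh t < t * (Real.cosh t + 1) / 2 := by
  have h2 : Real.sinh t = 2 * Real.sinh (t / 2) * Real.cosh (t / 2) := by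
    rw [show t = 2 * (t/2) by ring, Real.sinh_two_mul]; ring_nf
  have h3 : Real.cosh t + 1 = 2 * Real.cosh (t / 2) ^ 2 := by
    have := Real.cosh_two_mul (t / 2)
    have hsq := Real.cosh_sq (t / 2)
    have : Real.cosh t = Real.cosh (t/2) ^ 2 + Real.sinh (t/2) ^ 2 := by
      have h := Real.cosh_two_mul (t/2)
      rwa [show 2 * (t/2) = t by ring] at h
    nlinarith [Real.cosh_sq (t/2)]
  have hkey : Real.sinh (t / 2) < (t / 2) * Real.cosh (t / 2) :=
    sinh_lt_mul_cosh (by linarith)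
  have hcpos : 0 < Real.cosh (t / 2) := Real.cosh_pos _
  rw [h2, h3]
  nlinarith

private lemma main_ineq {t : ℝ} (ht : 0 < t) :
    Real.pi - 3 * Real.arccos (Real.cosh t / (Real.cosh t + 1)) <
      Real.sqrt 3 / 4 * t ^ 2 := by
  set f : ℝ → ℝ := fun s => Real.sqrt 3 / 4 * s ^ 2 +
      3 * Real.arccos (Real.cosh s / (Real.cosh s + 1)) - Real.pi with hf
  have hden : ∀ s : ℝ, Real.cosh s + 1 ≠ 0 := fun s => by
    have := Real.cosh_pos (x := s); linarith
  have hmono : StrictMonoOn f (Set.Ici 0) := by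
    apply strictMonoOn_of_deriv_pos (convex_Ici 0)
    · apply Continuous.continuousOn
      apply Continuous.sub _ continuous_const
      apply Continuous.add
      · continuity
      · exact continuous_const.mul (Real.continuous_arccos.comp
          (Real.continuous_cosh.div (Real.continuous_cosh.add continuous_const) hden))
    · intro s hs
      rw [interior_Ici] at hs
      set c := Real.cosh s with hc
      have hc1 : 1 < c := Real.one_lt_cosh.2 (ne_of_gt hs)
      have hcp : (0:ℝ) < c + 1 := by linarith
      have hu_lt : c / (c + 1) < 1 := (div_lt_one hcp).2 (by linarith)
      have hu_pos : 0 < c / (c + 1) := div_pos (by linarith) hcp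
      have hune1 : c / (c + 1) ≠ 1 := ne_of_lt hu_lt
      have hunem1 : c / (c + 1) ≠ -1 := by linarith
      -- derivative of the inner function
      have hu : HasDerivAt (fun s => Real.cosh s / (Real.cosh s + 1))
          (Real.sinh s / (c + 1) ^ 2) s := by
        have h1 : HasDerivAt (fun s => Real.cosh s / (Real.cosh s + 1))
            ((Real.sinh s * (c + 1) - c * Real.sinh s) / (c + 1) ^ 2) s :=
          (Real.hasDerivAt_cosh s).div ((Real.hasDerivAt_cosh s).add_const 1)
            (hden s)
        convert h1 using 1
        field_simp
        ring
      have harc : HasDerivAt (fun s => Real.arccos (Real.cosh s / (Real.cosh s + 1)))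
          (-(1 / Real.sqrt (1 - (c / (c + 1)) ^ 2)) * (Real.sinh s / (c + 1) ^ 2)) s :=
        by have := (Real.hasDerivAt_arccos hunem1 hune1).comp s hu; exact this
      have hfd : HasDerivAt f (Real.sqrt 3 / 4 * (2 * s) +
          3 * (-(1 / Real.sqrt (1 - (c / (c + 1)) ^ 2)) * (Real.sinh s / (c + 1) ^ 2))) s := by
        have h1 : HasDerivAt (fun s : ℝ => Real.sqrt 3 / 4 * s ^ 2)
            (Real.sqrt 3 / 4 * (2 * s)) s := by
          simpa using (HasDerivAt.const_mul (Real.sqrt 3 / 4)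
            (hasDerivAt_pow 2 s))
        simpa [hf] using (h1.add (harc.const_mul 3)).sub_const Real.pi
      rw [hfd.deriv]
      -- simplify sqrt(1 - u^2)
      have hsq : 1 - (c / (c + 1)) ^ 2 = (2 * c + 1) / (c + 1) ^ 2 := by
        field_simp; ring
      have hroot : Real.sqrt (1 - (c / (c + 1)) ^ 2)
          = Real.sqrt (2 * c + 1) / (c + 1) := by
        rw [hsq, Real.sqrt_div (by linarith), Real.sqrt_sq hcp.le]
      rw [hroot]
      have h2c : (0:ℝ) < 2 * c + 1 := by linarith
      have hr3 : Real.sqrt 3 ≤ Real.sqrt (2 * c + 1) :=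
        Real.sqrt_le_sqrt (by linarith)
      have hr3pos : (0:ℝ) < Real.sqrt 3 := Real.sqrt_pos.2 (by norm_num)
      have hrpos : (0:ℝ) < Real.sqrt (2 * c + 1) := lt_of_lt_of_le hr3pos hr3
      have hsinh : Real.sinh s < s * (c + 1) / 2 := sinh_lt_half hs
      have hsinhpos : 0 < Real.sinh s := Real.sinh_pos_iff.2 hs
      -- goal: √3/4 * (2s) + 3 * (-(1/(√(2c+1)/(c+1))) * (sinh s/(c+1)^2)) > 0
      have hterm : 3 * ((1 / (Real.sqrt (2 * c + 1) / (c + 1))) *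
          (Real.sinh s / (c + 1) ^ 2)) = 3 * Real.sinh s / ((c + 1) * Real.sqrt (2 * c + 1)) := by
        field_simp
      have hgoal : 3 * Real.sinh s / ((c + 1) * Real.sqrt (2 * c + 1))
          < Real.sqrt 3 / 4 * (2 * s) := by
        rw [div_lt_iff₀ (by positivity)]
        have h1 : 3 * Real.sinh s < 3 * (s * (c + 1) / 2) := by linarith
        have h2 : 3 * (s * (c + 1) / 2) ≤
            Real.sqrt 3 / 4 * (2 * s) * ((c + 1) * Real.sqrt (2 * c + 1)) := by
          have h33 : Real.sqrt 3 * Real.sqrt 3 = 3 :=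
            Real.mul_self_sqrt (by norm_num)
          have hss : Real.sqrt 3 * Real.sqrt 3 ≤ Real.sqrt 3 * Real.sqrt (2 * c + 1) :=
            mul_le_mul_of_nonneg_left hr3 hr3pos.le
          have hnn : (0:ℝ) ≤ s * (c + 1) / 2 := by nlinarith [mul_pos hs hcp]
          nlinarith [mul_le_mul_of_nonneg_right hss hnn]
        linarith
      nlinarith [hgoal, hterm]
  have hf0 : f 0 = 0 := by
    have : Real.cosh 0 / (Real.cosh 0 + 1) = 1 / 2 := by
      rw [Real.cosh_zero]; norm_num
    have harc : Real.arccos (1 / 2) = Real.pi / 3 := by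
      rw [← Real.cos_pi_div_three]
      exact Real.arccos_cos (by positivity) (by linarith [Real.pi_pos])
    show Real.sqrt 3 / 4 * (0:ℝ) ^ 2 +
        3 * Real.arccos (Real.cosh 0 / (Real.cosh 0 + 1)) - Real.pi = 0
    rw [this, harc]; ring
  have := hmono (Set.self_mem_Ici) (Set.mem_Ici.2 ht.le) ht
  rw [hf0] at this
  simp only [hf] at this
  linarith

theorem stmt_9 (r a : ℝ) (hr : 0 < r) (ha : 0 < a) :
    r ^ 2 * (Real.pi - 3 * Real.arccos (Real.cosh (a / r) / (Real.cosh (a / r) + 1))) <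
      Real.sqrt 3 / 4 * a ^ 2 := by
  have ht : 0 < a / r := div_pos ha hr
  have h := main_ineq ht
  have hr2 : (0:ℝ) < r ^ 2 := by positivity
  have := mul_lt_mul_of_pos_left h hr2
  calc r ^ 2 * (Real.pi - 3 * Real.arccos (Real.cosh (a / r) / (Real.cosh (a / r) + 1)))
      < r ^ 2 * (Real.sqrt 3 / 4 * (a / r) ^ 2) := this
    _ = Real.sqrt 3 / 4 * a ^ 2 := by
        field_simp
end

section
/- For r > 0, the limit as a → 2r·arctan(√2) of 12r³·∫₀^{tan(a/(2r))} t·arctan(t)/((3 − t²)√(2 − t²)) dt equals π²·r³, i.e., 12·∫₀^{√2} t·arctan(t)/((3 − t²)√(2 − t²)) dt = π². -/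
open Real MeasureTheory intervalIntegral Set Filter





lemma key_alg (s k l c : ℝ) (hsk : s^2 + k^2 = 1) (hl2 : l^2 = 1 + c^2) (hl1 : 1 ≤ l) :
    (1 + 1/(1 + ((l-1)*(s*k)/(k^2 + l*s^2))^2) *
      (((l-1)*(k*k + s*(-s))*(k^2 + l*s^2) - (l-1)*(s*k)*(2*k*(-s) + l*(2*s*k)))
        /(k^2 + l*s^2)^2)) / l = (1 + c^2*s^2)⁻¹ := by
  have hlpos : (0:ℝ) < l := by linarith
  have hQ : (0:ℝ) < k^2 + l*s^2 := by nlinarith [sq_nonneg s, sq_nonneg k]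
  have hden : (0:ℝ) < 1 + c^2*s^2 := by nlinarith [sq_nonneg (c*s)]
  have hD : (k^2 + l*s^2)^2 + ((l-1)*(s*k))^2 = 1 + c^2*s^2 := by
    linear_combination (1 + k^2 + s^2*l^2) * hsk + s^2 * hl2
  have hN : (l-1)*(k*k + s*(-s))*(k^2 + l*s^2) - (l-1)*(s*k)*(2*k*(-s) + l*(2*s*k))
      = l - (1 + c^2*s^2) := by
    linear_combination (l - 1 - k^2 + k^2*l + s^2*l - s^2*l^2) * hsk + (-s^2) * hl2
  have h3 : 1 + ((l-1)*(s*k)/(k^2 + l*s^2))^2 = (1 + c^2*s^2)/(k^2 + l*s^2)^2 := by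
    field_simp
    linear_combination hD
  rw [h3, hN]
  rw [one_div_div, div_mul_div_comm, mul_comm ((k^2+l*s^2)^2) (l - _),
    mul_div_mul_right _ _ (pow_ne_zero 2 hQ.ne')]
  field_simp
  ring

lemma cont_inv_sin (c : ℝ) : Continuous fun θ : ℝ => (1 + c^2 * Real.sin θ^2)⁻¹ := by
  apply Continuous.inv₀
  · continuity
  · intro θ; nlinarith [sq_nonneg (c * Real.sin θ)]

lemma hasDeriv_L1 (c : ℝ) (l : ℝ) (hl2 : l^2 = 1 + c^2) (hl1 : 1 ≤ l) (θ : ℝ) :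
    HasDerivAt (fun θ : ℝ =>
      (θ + Real.arctan ((l - 1) * (Real.sin θ * Real.cos θ)
        / (Real.cos θ^2 + l * Real.sin θ^2))) / l)
      ((1 + c^2 * Real.sin θ^2)⁻¹) θ := by
  have hlpos : (0:ℝ) < l := by linarith
  have hsk : Real.sin θ^2 + Real.cos θ^2 = 1 := Real.sin_sq_add_cos_sq θ
  have hQθ : (0:ℝ) < Real.cos θ^2 + l * Real.sin θ^2 := by
    nlinarith [sq_nonneg (Real.sin θ), sq_nonneg (Real.cos θ)]
  have hP : HasDerivAt (fun θ => (l - 1) * (Real.sin θ * Real.cos θ))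
      ((l - 1) * (Real.cos θ * Real.cos θ + Real.sin θ * (-Real.sin θ))) θ :=
    (((Real.hasDerivAt_sin θ).mul (Real.hasDerivAt_cos θ))).const_mul (l - 1)
  have hQd : HasDerivAt (fun θ => Real.cos θ^2 + l * Real.sin θ^2)
      (2 * Real.cos θ * (-Real.sin θ) + l * (2 * Real.sin θ * Real.cos θ)) θ := by
    have h1 : HasDerivAt (fun θ => Real.cos θ^2) (2 * Real.cos θ * (-Real.sin θ)) θ := by
      simpa using ((Real.hasDerivAt_cos θ).fun_pow 2)
    have h2 : HasDerivAt (fun θ => l * Real.sin θ^2) (l * (2 * Real.sin θ * Real.cos θ)) θ := by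
      have := ((Real.hasDerivAt_sin θ).pow 2).const_mul l
      simpa [mul_comm, mul_assoc] using this
    simpa using h1.fun_add h2
  have hdiv := hP.div hQd hQθ.ne'
  have harc := hdiv.arctan
  have htot := ((hasDerivAt_id θ).add harc).div_const l
  refine htot.congr_deriv ?_
  have := key_alg (Real.sin θ) (Real.cos θ) l c hsk hl2 hl1
  rw [← this]
  rfl

lemma L1 (c : ℝ) :
    ∫ θ in (0:ℝ)..(π/2), (1 + c^2 * Real.sin θ^2)⁻¹
      = π / (2 * Real.sqrt (1 + c^2)) := by
  have h1c : (0:ℝ) < 1 + c^2 := by positivity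
  set l : ℝ := Real.sqrt (1 + c^2) with hldef
  have hl2 : l^2 = 1 + c^2 := Real.sq_sqrt h1c.le
  have hl1 : 1 ≤ l := by
    nlinarith [Real.sqrt_nonneg (1 + c^2)]
  rw [intervalIntegral.integral_eq_sub_of_hasDerivAt
      (fun θ _ => hasDeriv_L1 c l hl2 hl1 θ) ((cont_inv_sin c).intervalIntegrable _ _)]
  have hpi : Real.sin (π/2) = 1 := Real.sin_pi_div_two
  have hpc : Real.cos (π/2) = 0 := Real.cos_pi_div_two
  rw [hpi, hpc]
  simp
  ring


lemma L2 : ∫ θ in (0:ℝ)..(π/2), (1 + 2 * Real.cos θ^2)⁻¹ = π / (2 * Real.sqrt 3) := by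
  have h := L1 (Real.sqrt 2)
  have h2 : (Real.sqrt 2)^2 = 2 := Real.sq_sqrt (by norm_num)
  rw [h2] at h
  have hrefl := intervalIntegral.integral_comp_sub_left
    (a := (0:ℝ)) (b := π/2) (fun θ => (1 + 2 * Real.sin θ^2)⁻¹) (π/2)
  simp only [sub_zero, sub_self] at hrefl
  have : ∀ θ : ℝ, (1 + 2 * Real.sin (π/2 - θ)^2)⁻¹ = (1 + 2 * Real.cos θ^2)⁻¹ := by
    intro θ; rw [Real.sin_pi_div_two_sub]
  calc ∫ θ in (0:ℝ)..(π/2), (1 + 2 * Real.cos θ^2)⁻¹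
      = ∫ θ in (0:ℝ)..(π/2), (1 + 2 * Real.sin (π/2 - θ)^2)⁻¹ := by
        apply intervalIntegral.integral_congr; intro θ _; exact (this θ).symm
    _ = ∫ θ in (0:ℝ)..(π/2), (1 + 2 * Real.sin θ^2)⁻¹ := hrefl
    _ = π / (2 * Real.sqrt (1+2)) := h
    _ = π / (2 * Real.sqrt 3) := by norm_num


noncomputable def Hfun (θ c : ℝ) : ℝ :=
  Real.sqrt 2 * Real.sin θ^2 / ((1 + 2 * Real.cos θ^2) * (1 + c^2 * Real.sin θ^2))

lemma Hfun_cont : Continuous (Function.uncurry Hfun) := by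
  unfold Function.uncurry Hfun
  apply Continuous.div
  · fun_prop
  · fun_prop
  · rintro ⟨θ, c⟩
    have h1 : (0:ℝ) < 1 + 2 * Real.cos θ^2 := by positivity
    have h2 : (0:ℝ) < 1 + c^2 * Real.sin θ^2 := by nlinarith [sq_nonneg (c * Real.sin θ)]
    positivity

lemma arctan_as_integral (s : ℝ) :
    Real.arctan (Real.sqrt 2 * s) = ∫ c in (0:ℝ)..Real.sqrt 2, s / (1 + c^2 * s^2) := by
  have hderiv : ∀ c : ℝ, HasDerivAt (fun c : ℝ => Real.arctan (c * s))
      (s / (1 + c^2 * s^2)) c := by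
    intro c
    have h := ((hasDerivAt_id c).mul_const s).arctan
    simp only [id_eq] at h
    convert h using 1
    rw [mul_pow]
    ring
  have hcont : Continuous fun c : ℝ => s / (1 + c^2 * s^2) := by
    apply Continuous.div continuous_const (by fun_prop)
    intro c; nlinarith [sq_nonneg (c*s)]
  rw [intervalIntegral.integral_eq_sub_of_hasDerivAt (fun c _ => hderiv c)
    (hcont.intervalIntegrable _ _)]
  simp

-- inner θ-integral evaluation for fixed c
lemma inner_eval (c : ℝ) :
    ∫ θ in (0:ℝ)..(π/2), Hfun θ c
      = Real.sqrt 2 / (2 + 3 * c^2) * (3 * (π / (2 * Real.sqrt 3)) - π / (2 * Real.sqrt (1 + c^2))) := by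
  have hpf : ∀ θ : ℝ, Hfun θ c
      = Real.sqrt 2 / (2 + 3 * c^2) * (3 * (1 + 2 * Real.cos θ^2)⁻¹ - (1 + c^2 * Real.sin θ^2)⁻¹) := by
    intro θ
    have hsk : Real.sin θ^2 + Real.cos θ^2 = 1 := Real.sin_sq_add_cos_sq θ
    have h1 : (0:ℝ) < 1 + 2 * Real.cos θ^2 := by positivity
    have h2 : (0:ℝ) < 1 + c^2 * Real.sin θ^2 := by nlinarith [sq_nonneg (c * Real.sin θ)]
    have h3 : (0:ℝ) < 2 + 3 * c^2 := by positivity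
    have hs1 : Real.sin θ^2 ≤ 1 := Real.sin_sq_le_one θ
    unfold Hfun
    rw [Real.cos_sq']
    have h1' : (0:ℝ) < 1 + 2 * (1 - Real.sin θ^2) := by nlinarith
    field_simp
    ring
  have hI1 : IntervalIntegrable (fun θ => (1 + 2 * Real.cos θ^2)⁻¹) volume 0 (π/2) := by
    apply Continuous.intervalIntegrable
    apply Continuous.inv₀ (by fun_prop)
    intro θ; positivity
  have hI2 : IntervalIntegrable (fun θ => (1 + c^2 * Real.sin θ^2)⁻¹) volume 0 (π/2) := by
    apply Continuous.intervalIntegrable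
    apply Continuous.inv₀ (by fun_prop)
    intro θ; nlinarith [sq_nonneg (c * Real.sin θ)]
  calc ∫ θ in (0:ℝ)..(π/2), Hfun θ c
      = ∫ θ in (0:ℝ)..(π/2), Real.sqrt 2 / (2 + 3 * c^2) *
          (3 * (1 + 2 * Real.cos θ^2)⁻¹ - (1 + c^2 * Real.sin θ^2)⁻¹) := by
        apply intervalIntegral.integral_congr; intro θ _; exact hpf θ
    _ = Real.sqrt 2 / (2 + 3 * c^2) * ∫ θ in (0:ℝ)..(π/2),
          (3 * (1 + 2 * Real.cos θ^2)⁻¹ - (1 + c^2 * Real.sin θ^2)⁻¹) := by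
        rw [intervalIntegral.integral_const_mul]
    _ = Real.sqrt 2 / (2 + 3 * c^2) * (3 * (π / (2 * Real.sqrt 3)) - π / (2 * Real.sqrt (1 + c^2))) := by
        rw [intervalIntegral.integral_sub (hI1.const_mul 3) hI2,
          intervalIntegral.integral_const_mul, L2, L1]


lemma arctan_sqrt_three : Real.arctan (Real.sqrt 3) = π/3 := by
  have h : Real.tan (π/3) = Real.sqrt 3 := by
    rw [Real.tan_eq_sin_div_cos, Real.sin_pi_div_three, Real.cos_pi_div_three]
    ring
  rw [← h, Real.arctan_tan] <;> nlinarith [Real.pi_pos]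

lemma arctan_inv_sqrt_three : Real.arctan (1 / Real.sqrt 3) = π/6 := by
  have h3 : Real.sqrt 3 > 0 := by positivity
  have h : Real.tan (π/6) = 1 / Real.sqrt 3 := by
    rw [Real.tan_eq_sin_div_cos, Real.sin_pi_div_six, Real.cos_pi_div_six]
    field_simp
  rw [← h, Real.arctan_tan] <;> nlinarith [Real.pi_pos]

lemma outer_eval :
    ∫ c in (0:ℝ)..Real.sqrt 2,
      Real.sqrt 2 / (2 + 3 * c^2) * (3 * (π / (2 * Real.sqrt 3)) - π / (2 * Real.sqrt (1 + c^2)))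
      = π^2 / 12 := by
  have h2 : (Real.sqrt 2)^2 = 2 := Real.sq_sqrt (by norm_num)
  have h3 : (Real.sqrt 3)^2 = 3 := Real.sq_sqrt (by norm_num)
  have h6 : (Real.sqrt 6)^2 = 6 := Real.sq_sqrt (by norm_num)
  have h2p : (0:ℝ) < Real.sqrt 2 := by positivity
  have h3p : (0:ℝ) < Real.sqrt 3 := by positivity
  have h6p : (0:ℝ) < Real.sqrt 6 := by positivity
  have h23 : Real.sqrt 2 * Real.sqrt 3 = Real.sqrt 6 := by
    rw [← Real.sqrt_mul (by norm_num : (0:ℝ) ≤ 2)]; norm_num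
  -- antiderivative
  set Ψ : ℝ → ℝ := fun c => π/2 * (Real.arctan (Real.sqrt 6 * c / 2)
    - Real.arctan (c / (Real.sqrt 2 * Real.sqrt (1 + c^2)))) with hΨ
  have hderiv : ∀ c : ℝ, HasDerivAt Ψ
      (Real.sqrt 2 / (2 + 3 * c^2) * (3 * (π / (2 * Real.sqrt 3)) - π / (2 * Real.sqrt (1 + c^2)))) c := by
    intro c
    have h1c : (0:ℝ) < 1 + c^2 := by positivity
    set m : ℝ := Real.sqrt (1 + c^2) with hm
    have hm2 : m^2 = 1 + c^2 := Real.sq_sqrt h1c.le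
    have hmp : (0:ℝ) < m := Real.sqrt_pos.mpr h1c
    have hd1 : HasDerivAt (fun c : ℝ => Real.arctan (Real.sqrt 6 * c / 2))
        (1 / (1 + (Real.sqrt 6 * c / 2)^2) * (Real.sqrt 6 * 1 / 2)) c := by
      exact (((hasDerivAt_id c).const_mul (Real.sqrt 6)).div_const 2).arctan
    have hdm : HasDerivAt (fun c : ℝ => Real.sqrt (1 + c^2)) (1 / (2 * m) * (0 + 2 * c)) c := by
      have hinner : HasDerivAt (fun c : ℝ => 1 + c^2) (0 + 2 * c) c := by
        simpa using (hasDerivAt_const c (1:ℝ)).fun_add ((hasDerivAt_id' c).fun_pow 2)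
      exact (Real.hasDerivAt_sqrt h1c.ne').comp c hinner
    have hdenne : Real.sqrt 2 * m ≠ 0 := by positivity
    have hdw : HasDerivAt (fun c : ℝ => c / (Real.sqrt 2 * Real.sqrt (1 + c^2)))
        ((1 * (Real.sqrt 2 * m) - c * (Real.sqrt 2 * (1 / (2 * m) * (0 + 2 * c)))) / (Real.sqrt 2 * m)^2) c := by
      exact (hasDerivAt_id c).div (hdm.const_mul (Real.sqrt 2)) hdenne
    have hd2 := hdw.arctan
    have := (hd1.sub hd2).const_mul (π/2)
    refine this.congr_deriv ?_
    have hq : (0:ℝ) < 2 + 3*c^2 := by positivity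
    have k1 : 2*m^2 + c^2 = 2 + 3*c^2 := by linarith [hm2]
    have eT1 : 1 / (1 + (Real.sqrt 6 * c / 2)^2) * (Real.sqrt 6 * 1 / 2)
        = Real.sqrt 6 / (2 + 3*c^2) := by
      have e1 : 1 + (Real.sqrt 6 * c / 2)^2 = (2 + 3*c^2)/2 := by
        rw [div_pow, mul_pow, h6]; ring
      rw [e1]
      field_simp
    have k2 : 1 + (c / (Real.sqrt 2 * m))^2 = (2 + 3*c^2)/(2*m^2) := by
      rw [div_pow, mul_pow, h2, ← k1]
      field_simp
    have k3 : (1 * (Real.sqrt 2 * m) - c * (Real.sqrt 2 * (1 / (2 * m) * (0 + 2 * c)))) / (Real.sqrt 2 * m)^2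
        = Real.sqrt 2 / (2*m^3) := by
      rw [mul_pow, h2]
      field_simp
      linear_combination 2 * hm2
    have eT2 : 1 / (1 + (c / (Real.sqrt 2 * m))^2) *
        ((1 * (Real.sqrt 2 * m) - c * (Real.sqrt 2 * (1 / (2 * m) * (0 + 2 * c)))) / (Real.sqrt 2 * m)^2)
        = Real.sqrt 2 / (m * (2 + 3*c^2)) := by
      rw [k2, k3, one_div_div]
      field_simp
    rw [eT1, eT2, ← h23]
    field_simp
    ring_nf
    linear_combination m * h3
  have hcont : Continuous fun c : ℝ =>
      Real.sqrt 2 / (2 + 3 * c^2) * (3 * (π / (2 * Real.sqrt 3)) - π / (2 * Real.sqrt (1 + c^2))) := by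
    apply Continuous.mul
    · apply Continuous.div continuous_const (by fun_prop)
      intro c; positivity
    · apply Continuous.sub continuous_const
      apply Continuous.div continuous_const
      · fun_prop
      · intro c
        have : (0:ℝ) < Real.sqrt (1 + c^2) := Real.sqrt_pos.mpr (by positivity)
        positivity
  rw [intervalIntegral.integral_eq_sub_of_hasDerivAt (fun c _ => hderiv c)
    (hcont.intervalIntegrable _ _)]
  have e0 : Ψ 0 = 0 := by simp [hΨ]
  have ea : Real.sqrt 6 * Real.sqrt 2 / 2 = Real.sqrt 3 := by
    rw [← h23]; rw [mul_comm (Real.sqrt 2) (Real.sqrt 3)]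
    field_simp
    nlinarith [h2, h2p]
  have eb : Real.sqrt 2 / (Real.sqrt 2 * Real.sqrt (1 + (Real.sqrt 2)^2)) = 1 / Real.sqrt 3 := by
    rw [h2]
    norm_num
    rw [div_mul_eq_div_div, div_self h2p.ne', one_div]
  have eΨ : Ψ (Real.sqrt 2) = π^2/12 := by
    rw [hΨ]
    simp only []
    rw [ea, eb, _root_.arctan_sqrt_three, _root_.arctan_inv_sqrt_three]
    ring
  rw [e0, eΨ]
  ring
lemma Gval : ∫ θ in (0:ℝ)..(π/2),
    Real.sqrt 2 * Real.sin θ * Real.arctan (Real.sqrt 2 * Real.sin θ) / (1 + 2 * Real.cos θ^2)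
    = π^2/12 := by
  have hstep : ∀ θ : ℝ,
      Real.sqrt 2 * Real.sin θ * Real.arctan (Real.sqrt 2 * Real.sin θ) / (1 + 2 * Real.cos θ^2)
      = ∫ c in (0:ℝ)..Real.sqrt 2, Hfun θ c := by
    intro θ
    rw [arctan_as_integral (Real.sin θ)]
    rw [← intervalIntegral.integral_const_mul, ← intervalIntegral.integral_div]
    apply intervalIntegral.integral_congr
    intro c _
    have h1 : (0:ℝ) < 1 + 2 * Real.cos θ^2 := by positivity
    have h2 : (0:ℝ) < 1 + c^2 * Real.sin θ^2 := by nlinarith [sq_nonneg (c * Real.sin θ)]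
    unfold Hfun
    field_simp
  have hswap : (∫ θ in (0:ℝ)..(π/2), ∫ c in (0:ℝ)..Real.sqrt 2, Hfun θ c)
      = ∫ c in (0:ℝ)..Real.sqrt 2, ∫ θ in (0:ℝ)..(π/2), Hfun θ c := by
    have hπ : (0:ℝ) ≤ π/2 := by positivity
    have h2 : (0:ℝ) ≤ Real.sqrt 2 := Real.sqrt_nonneg 2
    simp_rw [intervalIntegral.integral_of_le hπ, intervalIntegral.integral_of_le h2]
    apply MeasureTheory.integral_integral_swap
    rw [MeasureTheory.Measure.prod_restrict]
    exact ((Hfun_cont.continuousOn.integrableOn_compact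
        ((isCompact_Icc (a := (0:ℝ)) (b := π/2)).prod (isCompact_Icc (a := (0:ℝ)) (b := Real.sqrt 2)))).mono_set
      (Set.prod_mono Set.Ioc_subset_Icc_self Set.Ioc_subset_Icc_self))
  calc ∫ θ in (0:ℝ)..(π/2),
      Real.sqrt 2 * Real.sin θ * Real.arctan (Real.sqrt 2 * Real.sin θ) / (1 + 2 * Real.cos θ^2)
      = ∫ θ in (0:ℝ)..(π/2), ∫ c in (0:ℝ)..Real.sqrt 2, Hfun θ c := by
        apply intervalIntegral.integral_congr; intro θ _; exact hstep θ
    _ = ∫ c in (0:ℝ)..Real.sqrt 2, ∫ θ in (0:ℝ)..(π/2), Hfun θ c := hswap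
    _ = ∫ c in (0:ℝ)..Real.sqrt 2,
          Real.sqrt 2 / (2 + 3 * c^2) * (3 * (π / (2 * Real.sqrt 3)) - π / (2 * Real.sqrt (1 + c^2))) := by
        apply intervalIntegral.integral_congr; intro c _; exact inner_eval c
    _ = π^2/12 := outer_eval



noncomputable def ffun (t : ℝ) : ℝ := t * Real.arctan t / ((3 - t^2) * Real.sqrt (2 - t^2))

lemma ffun_meas : Measurable ffun := by
  apply Measurable.div
  · exact measurable_id.mul Real.continuous_arctan.measurable
  · apply Measurable.mul
    · fun_prop
    · exact Real.continuous_sqrt.measurable.comp (by fun_prop)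

lemma arctan_nonneg' {x : ℝ} (hx : 0 ≤ x) : 0 ≤ Real.arctan x := by
  rw [show (0:ℝ) = Real.arctan 0 by simp]
  exact Real.arctan_strictMono.monotone hx

lemma ffun_integrableIcc : IntegrableOn ffun (Set.Icc 0 (Real.sqrt 2)) volume := by
  have h2 : (Real.sqrt 2)^2 = 2 := Real.sq_sqrt (by norm_num)
  have h2p : (0:ℝ) < Real.sqrt 2 := by positivity
  have h2le : Real.sqrt 2 ≤ 3/2 := by nlinarith
  set g₀ : ℝ → ℝ := fun t => π * ((Real.sqrt 2 - t) ^ (-(1:ℝ)/2)) with hg₀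
  have hg₀int : IntegrableOn g₀ (Set.Icc 0 (Real.sqrt 2)) volume := by
    have hbase : IntervalIntegrable (fun x : ℝ => x ^ (-(1:ℝ)/2)) volume 0 (Real.sqrt 2) := by
      apply intervalIntegral.intervalIntegrable_rpow'
      norm_num
    have hcomp := hbase.comp_sub_left (Real.sqrt 2)
    simp only [sub_zero, sub_self] at hcomp
    have := hcomp.symm.const_mul π
    rw [intervalIntegrable_iff_integrableOn_Icc_of_le h2p.le] at this
    exact this
  apply MeasureTheory.Integrable.mono' hg₀int ffun_meas.aestronglyMeasurable.restrict
  filter_upwards [MeasureTheory.ae_restrict_mem measurableSet_Icc] with t ht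
  obtain ⟨ht0, ht2⟩ := ht
  have htt : t^2 ≤ 2 := by nlinarith
  have h3t : (1:ℝ) ≤ 3 - t^2 := by nlinarith
  have hs2t : 0 ≤ Real.sqrt 2 - t := by linarith
  have hfact : Real.sqrt (2 - t^2) = Real.sqrt (Real.sqrt 2 - t) * Real.sqrt (Real.sqrt 2 + t) := by
    rw [← Real.sqrt_mul hs2t]
    congr 1
    nlinarith
  have hge1 : (1:ℝ) ≤ Real.sqrt (Real.sqrt 2 + t) := by
    rw [show (1:ℝ) = Real.sqrt 1 by simp]
    exact Real.sqrt_le_sqrt (by nlinarith)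
  have harct : Real.arctan t ≤ π/2 := (Real.arctan_lt_pi_div_two t).le
  have harct0 : 0 ≤ Real.arctan t := arctan_nonneg' ht0
  have hnum : 0 ≤ t * Real.arctan t := mul_nonneg ht0 harct0
  have hnumle : t * Real.arctan t ≤ π := by nlinarith [Real.pi_pos]
  have hden0 : 0 ≤ (3 - t^2) * Real.sqrt (2 - t^2) := by positivity
  have hf0 : 0 ≤ ffun t := div_nonneg hnum hden0
  rw [Real.norm_of_nonneg hf0]
  have hrpow : (Real.sqrt 2 - t) ^ (-(1:ℝ)/2) = (Real.sqrt (Real.sqrt 2 - t))⁻¹ := by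
    rw [show (-(1:ℝ)/2) = -(1/2:ℝ) by norm_num, Real.rpow_neg hs2t, ← Real.sqrt_eq_rpow]
  rcases eq_or_lt_of_le hs2t with heq | hlt
  · have ht' : t = Real.sqrt 2 := by linarith
    have : Real.sqrt (2 - t^2) = 0 := by
      rw [ht', h2]; simp
    unfold ffun
    rw [this, mul_zero, div_zero, hg₀]
    simp only []
    rw [hrpow, ← heq]
    simp [Real.pi_pos.le]
  · have hsp : 0 < Real.sqrt (Real.sqrt 2 - t) := Real.sqrt_pos.mpr hlt
    have hdenge : Real.sqrt (Real.sqrt 2 - t) ≤ (3 - t^2) * Real.sqrt (2 - t^2) := by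
      rw [hfact]
      nlinarith [mul_le_mul_of_nonneg_left hge1 hsp.le,
        mul_nonneg hsp.le (Real.sqrt_nonneg (Real.sqrt 2 + t))]
    calc ffun t ≤ π / Real.sqrt (Real.sqrt 2 - t) := by
          unfold ffun
          exact div_le_div₀ Real.pi_pos.le hnumle hsp hdenge
      _ = g₀ t := by rw [hg₀]; simp only []; rw [hrpow, div_eq_mul_inv]

lemma ffun_intervalIntegrable : IntervalIntegrable ffun volume 0 (Real.sqrt 2) :=
  (intervalIntegrable_iff_integrableOn_Icc_of_le (by positivity)).mpr ffun_integrableIcc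

lemma prim_contOn : ContinuousOn (fun x => ∫ t in (0:ℝ)..x, ffun t) (Set.Icc 0 (Real.sqrt 2)) := by
  have hInt : IntegrableOn ffun (Set.uIcc 0 (Real.sqrt 2)) volume := by
    rw [Set.uIcc_of_le (by positivity : (0:ℝ) ≤ Real.sqrt 2)]
    exact ffun_integrableIcc
  have h := intervalIntegral.continuousOn_primitive_interval hInt
  rwa [Set.uIcc_of_le (by positivity : (0:ℝ) ≤ Real.sqrt 2)] at h

lemma subst_eq (θ₀ : ℝ) (h0 : 0 ≤ θ₀) (h1 : θ₀ < π/2) :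
    (∫ θ in (0:ℝ)..θ₀,
      Real.sqrt 2 * Real.sin θ * Real.arctan (Real.sqrt 2 * Real.sin θ) / (1 + 2 * Real.cos θ^2))
    = ∫ t in (0:ℝ)..(Real.sqrt 2 * Real.sin θ₀), ffun t := by
  have h2 : (Real.sqrt 2)^2 = 2 := Real.sq_sqrt (by norm_num)
  have h2p : (0:ℝ) < Real.sqrt 2 := by positivity
  have hs0 : Real.sin θ₀ < 1 := by
    rw [← Real.sin_pi_div_two]
    apply Real.strictMonoOn_sin ⟨by linarith, h1.le⟩ ⟨by linarith [Real.pi_pos], le_refl _⟩ h1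
  have hs0' : 0 ≤ Real.sin θ₀ := Real.sin_nonneg_of_nonneg_of_le_pi h0 (by linarith [Real.pi_pos])
  have huIcc : Set.uIcc 0 θ₀ = Set.Icc 0 θ₀ := Set.uIcc_of_le h0
  have hb2 : Real.sqrt 2 * Real.sin θ₀ < Real.sqrt 2 := by nlinarith
  have himg : (fun θ => Real.sqrt 2 * Real.sin θ) '' Set.uIcc 0 θ₀
      ⊆ Set.Icc 0 (Real.sqrt 2 * Real.sin θ₀) := by
    rintro x ⟨θ, hθ, rfl⟩
    rw [huIcc] at hθ
    obtain ⟨hθ0, hθ1⟩ := hθ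
    have hsθ0 : 0 ≤ Real.sin θ := Real.sin_nonneg_of_nonneg_of_le_pi hθ0
      (by linarith [Real.pi_pos])
    have hmono : Real.sin θ ≤ Real.sin θ₀ :=
      (Real.strictMonoOn_sin.monotoneOn ⟨by linarith, by linarith⟩
        ⟨by linarith, h1.le⟩ hθ1)
    simp only []
    constructor
    · positivity
    · nlinarith
  have hcontOn : ContinuousOn ffun (Set.Icc 0 (Real.sqrt 2 * Real.sin θ₀)) := by
    apply ContinuousOn.div
    · exact (continuous_id.mul Real.continuous_arctan).continuousOn
    · exact ((continuous_const.sub (continuous_pow 2)).mul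
        (Real.continuous_sqrt.comp (continuous_const.sub (continuous_pow 2)))).continuousOn
    · intro t ht
      obtain ⟨ht0, ht1⟩ := ht
      have htlt : t < Real.sqrt 2 := lt_of_le_of_lt ht1 hb2
      have htt : t^2 < 2 := by nlinarith
      have hsq : 0 < Real.sqrt (2 - t^2) := Real.sqrt_pos.mpr (by linarith)
      have h3 : (0:ℝ) < 3 - t^2 := by linarith
      positivity
  have hsubst := intervalIntegral.integral_comp_smul_deriv'
    (f := fun θ => Real.sqrt 2 * Real.sin θ) (f' := fun θ => Real.sqrt 2 * Real.cos θ)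
    (g := ffun) (a := 0) (b := θ₀)
    (fun θ _ => (Real.hasDerivAt_sin θ).const_mul (Real.sqrt 2))
    ((continuous_const.mul Real.continuous_cos).continuousOn)
    (hcontOn.mono himg)
  simp only [Real.sin_zero, mul_zero] at hsubst
  rw [← hsubst]
  apply intervalIntegral.integral_congr
  intro θ hθ
  rw [huIcc] at hθ
  obtain ⟨hθ0, hθ1⟩ := hθ
  have hc : 0 < Real.cos θ := Real.cos_pos_of_mem_Ioo ⟨by linarith, by linarith⟩
  have hsθ0 : 0 ≤ Real.sin θ := Real.sin_nonneg_of_nonneg_of_le_pi hθ0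
    (by linarith [Real.pi_pos])
  have hsc : Real.sin θ^2 + Real.cos θ^2 = 1 := Real.sin_sq_add_cos_sq θ
  have e1 : (2:ℝ) - (Real.sqrt 2 * Real.sin θ)^2 = 2 * Real.cos θ^2 := by
    rw [mul_pow, h2]; nlinarith
  have e2 : Real.sqrt (2 * Real.cos θ^2) = Real.sqrt 2 * Real.cos θ := by
    rw [Real.sqrt_mul (by norm_num : (0:ℝ) ≤ 2), Real.sqrt_sq hc.le]
  have e3 : (3:ℝ) - (Real.sqrt 2 * Real.sin θ)^2 = 1 + 2 * Real.cos θ^2 := by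
    rw [mul_pow, h2]; nlinarith
  show Real.sqrt 2 * Real.sin θ * Real.arctan (Real.sqrt 2 * Real.sin θ) / (1 + 2 * Real.cos θ^2)
    = (Real.sqrt 2 * Real.cos θ) • ffun (Real.sqrt 2 * Real.sin θ)
  unfold ffun
  rw [smul_eq_mul, e1, e2, e3]
  have hden : (0:ℝ) < 1 + 2 * Real.cos θ^2 := by positivity
  field_simp


lemma integral_ffun : ∫ t in (0:ℝ)..(Real.sqrt 2), ffun t = π^2/12 := by
  have h2p : (0:ℝ) < Real.sqrt 2 := by positivity
  have hπ2 : (0:ℝ) < π/2 := by positivity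
  set g : ℝ → ℝ := fun θ =>
    Real.sqrt 2 * Real.sin θ * Real.arctan (Real.sqrt 2 * Real.sin θ) / (1 + 2 * Real.cos θ^2)
    with hg
  have hgcont : Continuous g := by
    apply Continuous.div
    · exact (continuous_const.mul Real.continuous_sin).mul
        (Real.continuous_arctan.comp (continuous_const.mul Real.continuous_sin))
    · fun_prop
    · intro θ; positivity
  -- limit of LHS primitive
  have lim1 : Tendsto (fun θ₀ => ∫ θ in (0:ℝ)..θ₀, g θ) (nhdsWithin (π/2) (Set.Iio (π/2)))
      (nhds (∫ θ in (0:ℝ)..(π/2), g θ)) := by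
    have := (intervalIntegral.continuous_primitive (μ := volume) (f := g)
      (fun a b => hgcont.intervalIntegrable a b) 0).continuousAt (x := π/2)
    exact this.continuousWithinAt.tendsto
  -- limit of RHS
  have limw : Tendsto (fun θ₀ : ℝ => Real.sqrt 2 * Real.sin θ₀)
      (nhdsWithin (π/2) (Set.Iio (π/2))) (nhdsWithin (Real.sqrt 2) (Set.Icc 0 (Real.sqrt 2))) := by
    rw [tendsto_nhdsWithin_iff]
    constructor
    · have : Tendsto (fun θ₀ : ℝ => Real.sqrt 2 * Real.sin θ₀) (nhds (π/2))
          (nhds (Real.sqrt 2)) := by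
        have h := ((continuous_const (y := Real.sqrt 2)).fun_mul Real.continuous_sin).tendsto (π/2)
        simpa using h
      exact this.mono_left nhdsWithin_le_nhds
    · filter_upwards [Ioo_mem_nhdsLT_of_mem (Set.mem_Ioc.mpr ⟨hπ2, le_refl _⟩)] with θ₀ hθ₀
      obtain ⟨hθ0, hθ1⟩ := hθ₀
      have hs1 : Real.sin θ₀ ≤ 1 := Real.sin_le_one θ₀
      have hs0 : 0 ≤ Real.sin θ₀ := Real.sin_nonneg_of_nonneg_of_le_pi hθ0.le
        (by linarith [Real.pi_pos])
      constructor
      · positivity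
      · nlinarith
  have lim2 : Tendsto (fun θ₀ : ℝ => ∫ t in (0:ℝ)..(Real.sqrt 2 * Real.sin θ₀), ffun t)
      (nhdsWithin (π/2) (Set.Iio (π/2))) (nhds (∫ t in (0:ℝ)..(Real.sqrt 2), ffun t)) := by
    have hP := (prim_contOn (Real.sqrt 2) (Set.mem_Icc.mpr ⟨h2p.le, le_refl _⟩))
    exact hP.tendsto.comp limw
  have heq : ∀ᶠ θ₀ in nhdsWithin (π/2) (Set.Iio (π/2)),
      (∫ θ in (0:ℝ)..θ₀, g θ) = ∫ t in (0:ℝ)..(Real.sqrt 2 * Real.sin θ₀), ffun t := by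
    filter_upwards [Ioo_mem_nhdsLT_of_mem (Set.mem_Ioc.mpr ⟨hπ2, le_refl _⟩)] with θ₀ hθ₀
    exact subst_eq θ₀ hθ₀.1.le hθ₀.2
  have huniq := tendsto_nhds_unique (lim1.congr' heq) lim2
  rw [← huniq]
  exact Gval






theorem stmt_13 (r : ℝ) (hr : 0 < r) :
    Filter.Tendsto (fun a : ℝ =>
      12 * r ^ 3 * ∫ t in (0 : ℝ)..(Real.tan (a / (2 * r))),
        t * Real.arctan t / ((3 - t ^ 2) * Real.sqrt (2 - t ^ 2)))
      (nhdsWithin (2 * r * Real.arctan (Real.sqrt 2))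
        (Set.Iio (2 * r * Real.arctan (Real.sqrt 2))))
      (nhds (Real.pi ^ 2 * r ^ 3)) ∧
    12 * ∫ t in (0 : ℝ)..(Real.sqrt 2),
      t * Real.arctan t / ((3 - t ^ 2) * Real.sqrt (2 - t ^ 2)) = Real.pi ^ 2 := by
  have h2p : (0:ℝ) < Real.sqrt 2 := by positivity
  have har2 : 0 < Real.arctan (Real.sqrt 2) := by
    rw [show (0:ℝ) = Real.arctan 0 by simp]
    exact Real.arctan_strictMono h2p
  have har2' : Real.arctan (Real.sqrt 2) < π/2 := Real.arctan_lt_pi_div_two _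
  have h2r : (0:ℝ) < 2 * r := by linarith
  set T := 2 * r * Real.arctan (Real.sqrt 2) with hT
  have hTpos : 0 < T := by positivity
  have hB : (12:ℝ) * (∫ t in (0:ℝ)..(Real.sqrt 2), ffun t) = π^2 := by
    rw [integral_ffun]; ring
  constructor
  · -- limit part
    have htan : Tendsto (fun a : ℝ => Real.tan (a / (2*r)))
        (nhdsWithin T (Set.Iio T)) (nhdsWithin (Real.sqrt 2) (Set.Icc 0 (Real.sqrt 2))) := by
      rw [tendsto_nhdsWithin_iff]
      constructor
      · have hcosne : Real.cos (Real.arctan (Real.sqrt 2)) ≠ 0 :=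
          (Real.cos_arctan_pos _).ne'
        have htanc : ContinuousAt Real.tan (Real.arctan (Real.sqrt 2)) :=
          Real.continuousAt_tan.mpr hcosne
        have hdivc : Tendsto (fun a : ℝ => a / (2*r)) (nhds T)
            (nhds (Real.arctan (Real.sqrt 2))) := by
          have : Tendsto (fun a : ℝ => a / (2*r)) (nhds T) (nhds (T / (2*r))) :=
            (continuous_id.div_const (2*r)).tendsto T
          rwa [show T / (2*r) = Real.arctan (Real.sqrt 2) by
            rw [hT]; field_simp] at this
        have := (htanc.tendsto.comp hdivc)
        rw [Real.tan_arctan] at this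
        exact this.mono_left nhdsWithin_le_nhds
      · filter_upwards [Ioo_mem_nhdsLT_of_mem (Set.mem_Ioc.mpr ⟨hTpos, le_refl T⟩)]
          with a ha
        obtain ⟨ha0, ha1⟩ := ha
        have hq0 : 0 < a / (2*r) := by positivity
        have hq1 : a / (2*r) < Real.arctan (Real.sqrt 2) := by
          rw [div_lt_iff₀ h2r]
          calc a < T := ha1
            _ = Real.arctan (Real.sqrt 2) * (2*r) := by rw [hT]; ring
        constructor
        · exact Real.tan_nonneg_of_nonneg_of_le_pi_div_two hq0.le (by linarith)
        · have := Real.tan_lt_tan_of_nonneg_of_lt_pi_div_two hq0.le har2' hq1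
          rw [Real.tan_arctan] at this
          exact this.le
    have hPlim : Tendsto (fun a : ℝ => ∫ t in (0:ℝ)..(Real.tan (a / (2*r))), ffun t)
        (nhdsWithin T (Set.Iio T)) (nhds (∫ t in (0:ℝ)..(Real.sqrt 2), ffun t)) := by
      exact (prim_contOn (Real.sqrt 2) (Set.mem_Icc.mpr ⟨h2p.le, le_refl _⟩)).tendsto.comp htan
    have hfinal := hPlim.const_mul (12 * r^3)
    rw [integral_ffun] at hfinal
    have heq : 12 * r^3 * (π^2/12) = π^2 * r^3 := by ring
    rw [heq] at hfinal
    exact hfinal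
  · exact hB
end

section
/- For any fixed a > 0, the limit as r → ∞ of 12r³·∫₀^{tan(a/(2r))} t·arctan(t)/((3 − t²)√(2 − t²)) dt equals (√2/12)·a³. -/
open Real Filter Set intervalIntegral

noncomputable def fAux (t : ℝ) : ℝ :=
  t * Real.arctan t / ((3 - t ^ 2) * Real.sqrt (2 - t ^ 2))

lemma fAux_contAt {t : ℝ} (ht : t ∈ Set.Icc (-1 : ℝ) 1) : ContinuousAt fAux t := by
  have h2 : t ^ 2 ≤ 1 := by
    rw [sq_le_one_iff_abs_le_one, abs_le]; exact ht
  have hs : (1 : ℝ) ≤ Real.sqrt (2 - t ^ 2) := by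
    rw [show (1:ℝ) = Real.sqrt 1 by simp]
    exact Real.sqrt_le_sqrt (by linarith)
  have hne : (3 - t ^ 2) * Real.sqrt (2 - t ^ 2) ≠ 0 :=
    ne_of_gt (mul_pos (by linarith) (by linarith))
  unfold fAux
  exact (continuousAt_id.mul Real.continuous_arctan.continuousAt).div
    (((continuousAt_const.sub (continuousAt_pow t 2)).mul
      (Real.continuous_sqrt.continuousAt.comp (continuousAt_const.sub (continuousAt_pow t 2)))))
    hne

lemma fAux_intble {x : ℝ} (hx0 : 0 ≤ x) (hx1 : x ≤ 1) :
    IntervalIntegrable fAux MeasureTheory.volume 0 x := by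
  apply ContinuousOn.intervalIntegrable
  intro t ht
  rw [Set.uIcc_of_le hx0] at ht
  exact (fAux_contAt ⟨by linarith [ht.1], le_trans ht.2 hx1⟩).continuousWithinAt

lemma ratio_lim :
    Filter.Tendsto (fun x => (∫ t in (0:ℝ)..x, fAux t) / x ^ 3)
      (nhdsWithin 0 (Set.Ioi 0)) (nhds (1 / (9 * Real.sqrt 2))) := by
  have hIoo : Set.Ioo (0:ℝ) 1 ⊆ Set.Icc (-1:ℝ) 1 :=
    fun t ht => ⟨by linarith [ht.1], le_of_lt ht.2⟩
  -- derivative of the primitive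
  have hF : ∀ x ∈ Set.Ioo (0:ℝ) 1,
      HasDerivAt (fun y => ∫ t in (0:ℝ)..y, fAux t) (fAux x) x := by
    intro x hx
    refine intervalIntegral.integral_hasDerivAt_right (fAux_intble hx.1.le hx.2.le)
      (ContinuousAt.stronglyMeasurableAtFilter (s := Set.Ioo (-1:ℝ) 1) isOpen_Ioo
        (fun y hy => fAux_contAt ⟨hy.1.le, hy.2.le⟩) x ⟨by linarith [hx.1], hx.2⟩)
      (fAux_contAt (hIoo hx))
  have hG : ∀ x ∈ Set.Ioo (0:ℝ) 1, HasDerivAt (fun y : ℝ => y ^ 3) (3 * x ^ 2) x := by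
    intro x _
    simpa using hasDerivAt_pow 3 x
  have hg' : ∀ x ∈ Set.Ioo (0:ℝ) 1, (3 : ℝ) * x ^ 2 ≠ 0 := fun x hx =>
    ne_of_gt (mul_pos (by norm_num) (pow_pos hx.1 2))
  -- primitive tends to 0
  obtain ⟨C, hC⟩ := (isCompact_Icc (a := (-1:ℝ)) (b := 1)).exists_bound_of_continuousOn
    (fun t ht => (fAux_contAt ht).continuousWithinAt)
  have hfa : Filter.Tendsto (fun x => ∫ t in (0:ℝ)..x, fAux t)
      (nhdsWithin 0 (Set.Ioi 0)) (nhds 0) := by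
    have hbd : ∀ᶠ x in nhdsWithin (0:ℝ) (Set.Ioi 0),
        ‖∫ t in (0:ℝ)..x, fAux t‖ ≤ C * |x| := by
      filter_upwards [Ioo_mem_nhdsGT_of_mem (by norm_num : (0:ℝ) ∈ Set.Ico 0 1)] with x hx
      have : ‖∫ t in (0:ℝ)..x, fAux t‖ ≤ C * |x - 0| := by
        apply intervalIntegral.norm_integral_le_of_norm_le_const
        intro t ht
        rw [Set.uIoc_of_le hx.1.le] at ht
        exact hC t ⟨by linarith [ht.1], le_of_lt (lt_of_le_of_lt ht.2 hx.2)⟩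
      simpa using this
    have htd : Filter.Tendsto (fun x : ℝ => C * |x|) (nhdsWithin (0:ℝ) (Set.Ioi 0)) (nhds 0) := by
      have : Filter.Tendsto (fun x : ℝ => C * |x|) (nhds 0) (nhds (C * |0|)) :=
        (continuous_const.mul (continuous_abs)).tendsto 0
      simpa using this.mono_left nhdsWithin_le_nhds
    exact squeeze_zero_norm' hbd htd
  have hga : Filter.Tendsto (fun x : ℝ => x ^ 3) (nhdsWithin 0 (Set.Ioi 0)) (nhds 0) := by
    have : Filter.Tendsto (fun x : ℝ => x ^ 3) (nhds 0) (nhds ((0:ℝ) ^ 3)) :=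
      (continuous_pow 3).tendsto 0
    simpa using this.mono_left nhdsWithin_le_nhds
  -- the ratio of derivatives
  have harctan : Filter.Tendsto (fun x => Real.arctan x / x)
      (nhdsWithin 0 (Set.Ioi 0)) (nhds 1) := by
    have h := hasDerivAt_iff_tendsto_slope.1 (Real.hasDerivAt_arctan 0)
    norm_num at h
    have := h.mono_left (nhdsWithin_mono 0 (fun x hx => ne_of_gt hx))
    refine this.congr (fun x => ?_)
    simp [slope_def_field]
  have hden : Filter.Tendsto (fun x : ℝ => 1 / (3 * ((3 - x ^ 2) * Real.sqrt (2 - x ^ 2))))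
      (nhdsWithin 0 (Set.Ioi 0)) (nhds (1 / (9 * Real.sqrt 2))) := by
    have hc : ContinuousAt (fun x : ℝ => 1 / (3 * ((3 - x ^ 2) * Real.sqrt (2 - x ^ 2)))) 0 := by
      apply ContinuousAt.div continuousAt_const
      · exact continuousAt_const.mul (((continuousAt_const.sub (continuousAt_pow 0 2)).mul
          (Real.continuous_sqrt.continuousAt.comp (continuousAt_const.sub (continuousAt_pow 0 2)))))
      · have : (0:ℝ) < Real.sqrt 2 := Real.sqrt_pos.2 (by norm_num)
        simp only [ne_eq]; positivity
    have heq : (1:ℝ) / (3 * ((3 - (0:ℝ) ^ 2) * Real.sqrt (2 - (0:ℝ) ^ 2))) = 1 / (9 * Real.sqrt 2) := by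
      norm_num; ring
    have := hc.tendsto.mono_left (nhdsWithin_le_nhds (s := Set.Ioi 0))
    rwa [heq] at this
  have hdiv : Filter.Tendsto (fun x => fAux x / (3 * x ^ 2))
      (nhdsWithin 0 (Set.Ioi 0)) (nhds (1 / (9 * Real.sqrt 2))) := by
    have hmul := harctan.mul hden
    rw [one_mul] at hmul
    refine hmul.congr' ?_
    filter_upwards [Ioo_mem_nhdsGT_of_mem (by norm_num : (0:ℝ) ∈ Set.Ico 0 1)] with x hx
    have hx0 : x ≠ 0 := ne_of_gt hx.1
    have h2 : x ^ 2 < 1 := by nlinarith [hx.1, hx.2]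
    have h3 : (3 : ℝ) - x ^ 2 ≠ 0 := by linarith
    have hs : Real.sqrt (2 - x ^ 2) ≠ 0 := ne_of_gt (Real.sqrt_pos.2 (by linarith))
    unfold fAux
    field_simp
  exact HasDerivAt.lhopital_zero_right_on_Ioo (by norm_num) hF hG hg' hfa hga hdiv

theorem stmt_15 (a : ℝ) (ha : 0 < a) :
    Filter.Tendsto (fun r : ℝ =>
      12 * r ^ 3 * ∫ t in (0 : ℝ)..(Real.tan (a / (2 * r))),
        t * Real.arctan t / ((3 - t ^ 2) * Real.sqrt (2 - t ^ 2)))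
      Filter.atTop (nhds (Real.sqrt 2 / 12 * a ^ 3)) := by
  set u : ℝ → ℝ := fun r => Real.tan (a / (2 * r)) with hu_def
  -- the inner argument tends to 0 from the right
  have hv : Filter.Tendsto (fun r : ℝ => a / (2 * r)) Filter.atTop
      (nhdsWithin 0 (Set.Ioi 0)) := by
    rw [tendsto_nhdsWithin_iff]
    constructor
    · exact tendsto_const_nhds.div_atTop (tendsto_id.const_mul_atTop (by norm_num : (0:ℝ) < 2))
    · filter_upwards [Filter.eventually_gt_atTop (0:ℝ)] with r hr
      exact div_pos ha (by linarith)
  have hvsmall : ∀ᶠ r in Filter.atTop, a / (2 * r) ∈ Set.Ioo 0 (Real.pi / 2) :=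
    hv.eventually (Ioo_mem_nhdsGT_of_mem ⟨le_refl _, by positivity⟩)
  -- tan v / v → 1
  have htanr : Filter.Tendsto (fun v => Real.tan v / v)
      (nhdsWithin 0 (Set.Ioi 0)) (nhds 1) := by
    have hcos : Real.cos 0 ≠ 0 := by simp
    have h := hasDerivAt_iff_tendsto_slope.1 (Real.hasDerivAt_tan hcos)
    norm_num at h
    have := h.mono_left (nhdsWithin_mono 0 (fun x hx => ne_of_gt hx))
    refine this.congr (fun x => by simp [slope_def_field])
  -- u tends to 0 within Ioi 0
  have hu0 : Filter.Tendsto u Filter.atTop (nhdsWithin 0 (Set.Ioi 0)) := by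
    rw [tendsto_nhdsWithin_iff]
    constructor
    · have hc : ContinuousAt Real.tan 0 := Real.continuousAt_tan.2 (by simp)
      have h := hc.tendsto.comp (tendsto_nhdsWithin_iff.1 hv).1
      rw [Real.tan_zero] at h
      exact h
    · filter_upwards [hvsmall] with r hr
      exact Real.tan_pos_of_pos_of_lt_pi_div_two hr.1 hr.2
  -- r * u r → a / 2
  have hru : Filter.Tendsto (fun r => r * u r) Filter.atTop (nhds (a / 2)) := by
    have h1 : Filter.Tendsto (fun r => a / 2 * (Real.tan (a / (2 * r)) / (a / (2 * r))))
        Filter.atTop (nhds (a / 2 * 1)) :=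
      (htanr.comp hv).const_mul (a / 2)
    rw [mul_one] at h1
    refine h1.congr' ?_
    filter_upwards [Filter.eventually_gt_atTop (0:ℝ)] with r hr
    have h2r : (2:ℝ) * r ≠ 0 := by positivity
    have hva : a / (2 * r) ≠ 0 := by positivity
    field_simp
    ring
  have hcube : Filter.Tendsto (fun r => (r * u r) ^ 3) Filter.atTop (nhds ((a / 2) ^ 3)) :=
    hru.pow 3
  have hFr : Filter.Tendsto (fun r => (∫ t in (0:ℝ)..(u r), fAux t) / (u r) ^ 3)
      Filter.atTop (nhds (1 / (9 * Real.sqrt 2))) := ratio_lim.comp hu0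
  have hfinal := (hcube.mul hFr).const_mul (12 : ℝ)
  have hval : (12 : ℝ) * ((a / 2) ^ 3 * (1 / (9 * Real.sqrt 2))) = Real.sqrt 2 / 12 * a ^ 3 := by
    have h2 : Real.sqrt 2 * Real.sqrt 2 = 2 := Real.mul_self_sqrt (by norm_num)
    have hs : Real.sqrt 2 ≠ 0 := by positivity
    have h2' : Real.sqrt 2 ^ 2 = 2 := Real.sq_sqrt (by norm_num)
    field_simp
    linear_combination (-72 : ℝ) * h2'
  rw [hval] at hfinal
  refine hfinal.congr' ?_
  filter_upwards [hu0.eventually (Ioo_mem_nhdsGT_of_mem (by norm_num : (0:ℝ) ∈ Set.Ico 0 1))]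
    with r hr
  have hur : u r ≠ 0 := ne_of_gt hr.1
  show 12 * ((r * u r) ^ 3 * ((∫ t in (0:ℝ)..(u r), fAux t) / (u r) ^ 3)) =
    12 * r ^ 3 * ∫ t in (0:ℝ)..(u r), fAux t
  field_simp
end

section
/- For every r > 0 and 0 < a < 2r·arctan(√2), the spherical volume satisfies 12r³·∫₀^{tan(a/(2r))} t·arctan(t)/((3 − t²)√(2 − t²)) dt > (√2/12)·a³, and for every r > 0, a > 0 the hyperbolic volume satisfies 12r³·∫₀^{tanh(a/(2r))} t·artanh(t)/((3 + t²)√(2 + t²)) dt < (√2/12)·a³. -/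
lemma artanh_hasDerivAt {t : ℝ} (h1 : -1 < t) (h2 : t < 1) :
    HasDerivAt artanh (1 / (1 - t ^ 2)) t := by
  have hp : (0:ℝ) < 1 + t := by linarith
  have hm : (0:ℝ) < 1 - t := by linarith
  have A : HasDerivAt (fun x : ℝ => Real.log (1 + x)) (1 / (1 + t)) t := by
    have := (Real.hasDerivAt_log hp.ne').comp t ((hasDerivAt_id t).const_add 1)
    simpa [one_div, Function.comp_def] using this
  have B : HasDerivAt (fun x : ℝ => Real.log (1 - x)) (-(1 / (1 - t))) t := by
    have := (Real.hasDerivAt_log hm.ne').comp t ((hasDerivAt_id t).const_sub 1)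
    simpa [one_div, Function.comp_def] using this
  have C : HasDerivAt (fun x : ℝ => (1 / 2) * (Real.log (1 + x) - Real.log (1 - x)))
      ((1 / 2) * (1 / (1 + t) - -(1 / (1 - t)))) t := (A.sub B).const_mul _
  have heq : (1 / 2) * (1 / (1 + t) - -(1 / (1 - t))) = 1 / (1 - t ^ 2) := by
    have hq : (1:ℝ) - t ^ 2 ≠ 0 := by nlinarith
    field_simp
    ring
  rw [heq] at C
  apply C.congr_of_eventuallyEq
  have hmem : Set.Ioo (-1 : ℝ) 1 ∈ nhds t := Ioo_mem_nhds h1 h2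
  filter_upwards [hmem] with x hx
  have hx1 : (0:ℝ) < 1 + x := by linarith [hx.1]
  have hx2 : (0:ℝ) < 1 - x := by linarith [hx.2]
  unfold artanh
  rw [Real.log_div hx1.ne' hx2.ne']

lemma artanh_zero : artanh 0 = 0 := by simp [artanh]

lemma tanh_lt_one (x : ℝ) : Real.tanh x < 1 := by
  rw [Real.tanh_eq_sinh_div_cosh]
  exact (div_lt_one (Real.cosh_pos x)).mpr (Real.sinh_lt_cosh x)

lemma tanh_pos {x : ℝ} (hx : 0 < x) : 0 < Real.tanh x := by
  rw [Real.tanh_eq_sinh_div_cosh]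
  exact div_pos (by rwa [Real.sinh_pos_iff]) (Real.cosh_pos x)

lemma arctan_lb {t : ℝ} (ht : 0 ≤ t) : t - t ^ 3 / 3 ≤ Real.arctan t := by
  set f : ℝ → ℝ := fun x => Real.arctan x - (x - x ^ 3 / 3) with hf
  have hderiv : ∀ x : ℝ, HasDerivAt f (x ^ 4 / (1 + x ^ 2)) x := by
    intro x
    have h : HasDerivAt f (1 / (1 + x ^ 2) - (1 - 3 * x ^ 2 / 3)) x :=
      (Real.hasDerivAt_arctan x).sub
        ((hasDerivAt_id x).sub (((hasDerivAt_pow 3 x)).div_const 3))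
    convert h using 1
    have h2 : (0:ℝ) < 1 + x ^ 2 := by positivity
    field_simp
    ring
  have hmono : MonotoneOn f (Set.Ici (0:ℝ)) := by
    apply monotoneOn_of_deriv_nonneg (convex_Ici 0)
    · exact fun x _ => (hderiv x).continuousAt.continuousWithinAt
    · exact fun x _ => ((hderiv x).differentiableAt).differentiableWithinAt
    · intro x _
      rw [(hderiv x).deriv]
      positivity
  have := hmono (Set.self_mem_Ici) (Set.mem_Ici.mpr ht) ht
  simp only [hf] at this
  simp only [Real.arctan_zero] at this
  nlinarith [this]

lemma artanh_lb {t : ℝ} (h0 : 0 < t) (h1 : t < 1) : t + t ^ 3 / 3 < artanh t := by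
  set f : ℝ → ℝ := fun x => artanh x - (x + x ^ 3 / 3) with hf
  have hderiv : ∀ x ∈ Set.Ioo (-1:ℝ) 1, HasDerivAt f (x ^ 4 / (1 - x ^ 2)) x := by
    intro x hx
    have h : HasDerivAt f (1 / (1 - x ^ 2) - (1 + 3 * x ^ 2 / 3)) x :=
      (artanh_hasDerivAt hx.1 hx.2).sub
        ((hasDerivAt_id x).add (((hasDerivAt_pow 3 x)).div_const 3))
    convert h using 1
    have h2 : (0:ℝ) < 1 - x ^ 2 := by nlinarith [hx.1, hx.2]
    field_simp
    ring
  have hmono : StrictMonoOn f (Set.Ico (0:ℝ) 1) := by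
    apply strictMonoOn_of_deriv_pos (convex_Ico 0 1)
    · intro x hx
      have : HasDerivAt f (x ^ 4 / (1 - x ^ 2)) x :=
        hderiv x ⟨by linarith [hx.1], hx.2⟩
      exact this.continuousAt.continuousWithinAt
    · intro x hx
      rw [interior_Ico] at hx
      rw [(hderiv x ⟨by linarith [hx.1], hx.2⟩).deriv]
      have h2 : (0:ℝ) < 1 - x ^ 2 := by nlinarith [hx.1, hx.2]
      have hx0 : (0:ℝ) < x := hx.1
      positivity
  have := hmono (Set.mem_Ico.mpr ⟨le_refl 0, one_pos⟩) (Set.mem_Ico.mpr ⟨h0.le, h1⟩) h0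
  simp only [hf, artanh_zero] at this
  nlinarith [this]

lemma tanh_lt_self {x : ℝ} (hx : 0 < x) : Real.tanh x < x := by
  have h1 := tanh_lt_one x
  have h0 := tanh_pos hx
  have := artanh_lb h0 h1
  rw [artanh_tanh] at this
  nlinarith [this, pow_pos h0 3]

lemma artanh_continuousAt {t : ℝ} (h1 : -1 < t) (h2 : t < 1) : ContinuousAt artanh t :=
  (artanh_hasDerivAt h1 h2).continuousAt

set_option maxHeartbeats 1600000 in
theorem stmt_16 :
    (∀ r a : ℝ, 0 < r → 0 < a → a < 2 * r * Real.arctan (Real.sqrt 2) →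
      12 * r ^ 3 * ∫ t in (0 : ℝ)..(Real.tan (a / (2 * r))),
        t * Real.arctan t / ((3 - t ^ 2) * Real.sqrt (2 - t ^ 2)) >
        Real.sqrt 2 / 12 * a ^ 3) ∧
    (∀ r a : ℝ, 0 < r → 0 < a →
      12 * r ^ 3 * ∫ t in (0 : ℝ)..(Real.tanh (a / (2 * r))),
        t * artanh t / ((3 + t ^ 2) * Real.sqrt (2 + t ^ 2)) <
        Real.sqrt 2 / 12 * a ^ 3) := by
  have hs2 : Real.sqrt 2 * Real.sqrt 2 = 2 := Real.mul_self_sqrt (by norm_num)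
  have hs2pos : (0:ℝ) < Real.sqrt 2 := Real.sqrt_pos.mpr (by norm_num)
  constructor
  · -- spherical
    intro r a hr ha hlt
    set x : ℝ := a / (2 * r) with hxdef
    have hx : 0 < x := by positivity
    have hx2 : x < Real.arctan (Real.sqrt 2) := by
      rw [hxdef, div_lt_iff₀ (by positivity)]
      linarith [hlt]
    have hpi2 : Real.arctan (Real.sqrt 2) < Real.pi / 2 := Real.arctan_lt_pi_div_two _
    have hxpi : x < Real.pi / 2 := hx2.trans hpi2
    set T : ℝ := Real.tan x with hTdef
    have hxT : x < T := Real.lt_tan hx hxpi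
    have hT0 : 0 < T := hx.trans hxT
    have hT2 : T < Real.sqrt 2 := by
      have := Real.tan_lt_tan_of_nonneg_of_lt_pi_div_two hx.le hpi2 hx2
      rwa [Real.tan_arctan] at this
    have hsq : ∀ t ∈ Set.Icc (0:ℝ) T, t ^ 2 < 2 := by
      intro t ht
      nlinarith [ht.1, ht.2, hT2, hs2, hs2pos]
    -- pointwise bound
    have hpt : ∀ t ∈ Set.Icc (0:ℝ) T,
        t ^ 2 * (3 * Real.sqrt 2)⁻¹ ≤
          t * Real.arctan t / ((3 - t ^ 2) * Real.sqrt (2 - t ^ 2)) := by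
      intro t ht
      have ht2 := hsq t ht
      have h3t : (0:ℝ) < 3 - t ^ 2 := by linarith
      have hst0 : 0 < Real.sqrt (2 - t ^ 2) := Real.sqrt_pos.mpr (by linarith)
      have hstle : Real.sqrt (2 - t ^ 2) ≤ Real.sqrt 2 :=
        Real.sqrt_le_sqrt (by nlinarith [ht.1])
      have hA : t * (t - t ^ 3 / 3) ≤ t * Real.arctan t :=
        mul_le_mul_of_nonneg_left (arctan_lb ht.1) ht.1
      rw [← div_eq_mul_inv, div_le_div_iff₀ (by positivity) (by positivity)]
      nlinarith [hA, hstle, hst0, ht.1, h3t, hs2pos,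
        mul_le_mul_of_nonneg_left hstle (mul_nonneg (sq_nonneg t) h3t.le),
        mul_le_mul_of_nonneg_left hA (by positivity : (0:ℝ) ≤ 3 * Real.sqrt 2)]
    -- continuity of the integrand
    have hgc : ContinuousOn
        (fun t : ℝ => t * Real.arctan t / ((3 - t ^ 2) * Real.sqrt (2 - t ^ 2)))
        (Set.Icc 0 T) := by
      apply ContinuousOn.div
      · exact (continuous_id.mul Real.continuous_arctan).continuousOn
      · exact ((continuous_const.sub (continuous_pow 2)).mul
          (Real.continuous_sqrt.comp (continuous_const.sub (continuous_pow 2)))).continuousOn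
      · intro t ht
        have ht2 := hsq t ht
        have h3t : (0:ℝ) < 3 - t ^ 2 := by linarith
        have hst0 : 0 < Real.sqrt (2 - t ^ 2) := Real.sqrt_pos.mpr (by linarith)
        positivity
    -- integral comparison
    have hmono := intervalIntegral.integral_mono_on (μ := MeasureTheory.volume) hT0.le
      (f := fun t : ℝ => t ^ 2 * (3 * Real.sqrt 2)⁻¹)
      (g := fun t : ℝ => t * Real.arctan t / ((3 - t ^ 2) * Real.sqrt (2 - t ^ 2)))
      (((continuous_pow 2).mul continuous_const).intervalIntegrable 0 T)
      (hgc.intervalIntegrable_of_Icc hT0.le)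
      hpt
    have hval : (∫ t in (0:ℝ)..T, t ^ 2 * (3 * Real.sqrt 2)⁻¹)
        = T ^ 3 / 3 * (3 * Real.sqrt 2)⁻¹ := by
      rw [intervalIntegral.integral_mul_const, integral_pow]
      norm_num
    rw [hval] at hmono
    have ha2 : a = 2 * r * x := by
      rw [hxdef]; field_simp
    have hx3 : x ^ 3 < T ^ 3 := by
      have := pow_lt_pow_left₀ hxT hx.le (n := 3) (by norm_num)
      exact this
    have hinv : (3 * Real.sqrt 2)⁻¹ = Real.sqrt 2 / 6 := by
      rw [eq_div_iff (by norm_num : (6:ℝ) ≠ 0)]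
      field_simp
      nlinarith [hs2]
    rw [hinv] at hmono
    have hmono' : T ^ 3 / 3 * (Real.sqrt 2 / 6) ≤
        ∫ t in (0:ℝ)..T, t * Real.arctan t / ((3 - t ^ 2) * Real.sqrt (2 - t ^ 2)) := hmono
    rw [ha2, gt_iff_lt]
    nlinarith [hmono', hx3, hs2pos, hr, hx,
      mul_pos (mul_pos (pow_pos hr 3) hs2pos) (sub_pos.mpr hx3),
      mul_le_mul_of_nonneg_left hmono' (by positivity : (0:ℝ) ≤ 12 * r ^ 3)]
  · -- hyperbolic
    intro r a hr ha
    set x : ℝ := a / (2 * r) with hxdef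
    have hx : 0 < x := by positivity
    set T : ℝ := Real.tanh x with hTdef
    have hT0 : 0 < T := tanh_pos hx
    have hT1 : T < 1 := tanh_lt_one x
    have hatx : artanh T = x := artanh_tanh x
    -- derivative / FTC for (artanh t)^3
    have hF : ∀ t ∈ Set.uIcc (0:ℝ) T,
        HasDerivAt (fun s : ℝ => artanh s ^ 3)
          (3 * artanh t ^ 2 * (1 / (1 - t ^ 2))) t := by
      intro t ht
      rw [Set.uIcc_of_le hT0.le] at ht
      have h1 : -1 < t := by linarith [ht.1]
      have h2 : t < 1 := lt_of_le_of_lt ht.2 hT1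
      have := (artanh_hasDerivAt h1 h2).pow 3
      exact this.congr_deriv (by norm_num)
    have hcontd : ContinuousOn (fun t : ℝ => 3 * artanh t ^ 2 * (1 / (1 - t ^ 2)))
        (Set.Icc 0 T) := by
      apply ContinuousOn.mul
      · apply ContinuousOn.mul continuousOn_const
        intro t ht
        exact ((artanh_continuousAt (by linarith [ht.1]) (lt_of_le_of_lt ht.2 hT1)).continuousWithinAt).pow 2
      · apply ContinuousOn.div continuousOn_const
          (continuous_const.sub (continuous_pow 2)).continuousOn
        intro t ht
        have h2 : t < 1 := lt_of_le_of_lt ht.2 hT1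
        have : (0:ℝ) < 1 - t ^ 2 := by nlinarith [ht.1]
        positivity
    have hFTC : (∫ t in (0:ℝ)..T, 3 * artanh t ^ 2 * (1 / (1 - t ^ 2))) = x ^ 3 := by
      rw [intervalIntegral.integral_eq_sub_of_hasDerivAt hF
        (hcontd.intervalIntegrable_of_Icc hT0.le)]
      rw [hatx, artanh_zero]
      norm_num
    -- pointwise strict bound on Ioc
    have hpt : ∀ t ∈ Set.Ioc (0:ℝ) T,
        t * artanh t / ((3 + t ^ 2) * Real.sqrt (2 + t ^ 2)) <
          3 * artanh t ^ 2 * (1 / (1 - t ^ 2)) * (9 * Real.sqrt 2)⁻¹ := by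
      intro t ht
      have ht0 : 0 < t := ht.1
      have ht1 : t < 1 := lt_of_le_of_lt ht.2 hT1
      have h1t : (0:ℝ) < 1 - t ^ 2 := by nlinarith
      have hS0 : 0 < Real.sqrt (2 + t ^ 2) := Real.sqrt_pos.mpr (by positivity)
      have hSge : Real.sqrt 2 ≤ Real.sqrt (2 + t ^ 2) :=
        Real.sqrt_le_sqrt (by nlinarith)
      have hA : t + t ^ 3 / 3 < artanh t := artanh_lb ht0 ht1
      have hApos : 0 < artanh t := lt_trans (by positivity) hA
      set A := artanh t with hAdef
      set S := Real.sqrt (2 + t ^ 2) with hSdef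
      have hrhs : 3 * A ^ 2 * (1 / (1 - t ^ 2)) * (9 * Real.sqrt 2)⁻¹
          = A ^ 2 / ((1 - t ^ 2) * (3 * Real.sqrt 2)) := by
        have h2 : ((1:ℝ) - t ^ 2) ≠ 0 := ne_of_gt h1t
        rw [eq_div_iff (ne_of_gt (mul_pos h1t (by positivity)))]
        field_simp
        ring
      rw [hrhs, div_lt_div_iff₀ (mul_pos (by positivity : (0:ℝ) < 3 + t ^ 2) hS0)
        (mul_pos h1t (by positivity))]
      have h1 : t * (3 + t ^ 2) / 3 < A := by nlinarith [hA]
      have h1pos : 0 < t * (3 + t ^ 2) / 3 := by positivity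
      calc t * A * ((1 - t ^ 2) * (3 * Real.sqrt 2))
          ≤ t * A * (3 * Real.sqrt 2) := by
            apply mul_le_mul_of_nonneg_left _ (by positivity : (0:ℝ) ≤ t * A)
            nlinarith [sq_nonneg t, hs2pos]
        _ ≤ t * A * ((3 + t ^ 2) ^ 2 * S / 3) := by
            apply mul_le_mul_of_nonneg_left _ (by positivity : (0:ℝ) ≤ t * A)
            nlinarith [hSge, hS0, sq_nonneg t, sq_nonneg (t^2), hs2pos]
        _ = (A * ((3 + t ^ 2) * S)) * (t * (3 + t ^ 2) / 3) := by ring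
        _ < (A * ((3 + t ^ 2) * S)) * A := by
            apply mul_lt_mul_of_pos_left h1
            positivity
        _ = A ^ 2 * ((3 + t ^ 2) * S) := by ring
    -- continuity of g
    have hgc : ContinuousOn
        (fun t : ℝ => t * artanh t / ((3 + t ^ 2) * Real.sqrt (2 + t ^ 2)))
        (Set.Icc 0 T) := by
      apply ContinuousOn.div
      · apply ContinuousOn.mul continuous_id.continuousOn
        intro t ht
        exact (artanh_continuousAt (by linarith [ht.1])
          (lt_of_le_of_lt ht.2 hT1)).continuousWithinAt
      · exact ((continuous_const.add (continuous_pow 2)).mul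
          (Real.continuous_sqrt.comp (continuous_const.add (continuous_pow 2)))).continuousOn
      · intro t ht
        have hS0 : 0 < Real.sqrt (2 + t ^ 2) := Real.sqrt_pos.mpr (by positivity)
        positivity
    -- strict integral inequality
    have hlt := intervalIntegral.integral_lt_integral_of_continuousOn_of_le_of_exists_lt
      (f := fun t : ℝ => t * artanh t / ((3 + t ^ 2) * Real.sqrt (2 + t ^ 2)))
      (g := fun t : ℝ => 3 * artanh t ^ 2 * (1 / (1 - t ^ 2)) * (9 * Real.sqrt 2)⁻¹)
      hT0 hgc (hcontd.mul continuousOn_const)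
      (fun t ht => (hpt t ht).le)
      ⟨T, Set.right_mem_Icc.mpr hT0.le, hpt T (Set.right_mem_Ioc.mpr hT0)⟩
    have hval : (∫ t in (0:ℝ)..T, 3 * artanh t ^ 2 * (1 / (1 - t ^ 2)) * (9 * Real.sqrt 2)⁻¹)
        = x ^ 3 * (9 * Real.sqrt 2)⁻¹ := by
      rw [intervalIntegral.integral_mul_const, hFTC]
    rw [hval] at hlt
    have ha2 : a = 2 * r * x := by
      rw [hxdef]; field_simp
    have hinv : (9 * Real.sqrt 2)⁻¹ = Real.sqrt 2 / 18 := by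
      rw [eq_div_iff (by norm_num : (18:ℝ) ≠ 0)]
      field_simp
      nlinarith [hs2]
    rw [hinv] at hlt
    have hlt' : (∫ t in (0:ℝ)..T, t * artanh t / ((3 + t ^ 2) * Real.sqrt (2 + t ^ 2)))
        < x ^ 3 * (Real.sqrt 2 / 18) := hlt
    rw [ha2]
    nlinarith [hlt', hr, hx, hs2pos, pow_pos hr 3, pow_pos hx 3,
      mul_lt_mul_of_pos_left hlt' (by positivity : (0:ℝ) < 12 * r ^ 3)]
end
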